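/- arXiv:2212.09842 — 3 statements merged into one kernel-verified Lean document; each statement's English description precedes it below -/
import Mathlib

section
/- For every a ∈ [0,1), setting α = 1 − a, there exists an α-Hölder continuous map φ : [0,1] → [0,1] such that the lower metric mean dimension and the upper metric mean dimension of ([0,1], |·|, φ) are both equal to a. -/
open Filter Set Topology

noncomputable section

/-- `sep(n,φ,ε)`: the maximal cardinality of an `(n,φ,ε)`-separated set with respect to
the metric `d`, where a set `A` is `(n,φ,ε)`-separated if for all distinct `x, y ∈ A`
one has `max_{0 ≤ i < n} d(φ^i x, φ^i y) > ε`. -/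
def sepNum {X : Type*} (d : X → X → ℝ) (φ : X → X) (n : ℕ) (ε : ℝ) : ℕ :=
  sSup {m : ℕ | ∃ A : Finset X,
    (∀ x ∈ A, ∀ y ∈ A, x ≠ y → ∃ i < n, ε < d (φ^[i] x) (φ^[i] y)) ∧ A.card = m}

/-- `sep(φ,ε) = limsup_{n→∞} (1/n) log sep(n,φ,ε)`. -/
def sepExp {X : Type*} (d : X → X → ℝ) (φ : X → X) (ε : ℝ) : ℝ :=
  Filter.limsup (fun n : ℕ => Real.log (sepNum d φ n ε) / n) Filter.atTop

/-- The lower metric mean dimension: `liminf_{ε→0⁺} sep(φ,ε)/|log ε|`. -/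
def mdimLower {X : Type*} (d : X → X → ℝ) (φ : X → X) : ℝ :=
  Filter.liminf (fun ε : ℝ => sepExp d φ ε / |Real.log ε|) (nhdsWithin 0 (Set.Ioi 0))

/-- The upper metric mean dimension: `limsup_{ε→0⁺} sep(φ,ε)/|log ε|`. -/
def mdimUpper {X : Type*} (d : X → X → ℝ) (φ : X → X) : ℝ :=
  Filter.limsup (fun ε : ℝ => sepExp d φ ε / |Real.log ε|) (nhdsWithin 0 (Set.Ioi 0))

/-- The metric `d(x,y) = |x - y|` on `[0,1]`. -/
def dI : unitInterval → unitInterval → ℝ := fun x y => |(x : ℝ) - (y : ℝ)|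

namespace MMDaux

/-- triangle wave: distance to nearest even integer -/
def tri (t : ℝ) : ℝ := |t - 2 * (round (t / 2) : ℤ)|

lemma tri_nonneg (t : ℝ) : 0 ≤ tri t := abs_nonneg _

lemma tri_le (t : ℝ) (m : ℤ) : tri t ≤ |t - 2 * (m:ℝ)| := by
  rcases eq_or_ne (round (t/2)) m with h | h
  · simp [tri, h]
  · have h1 : |t/2 - (round (t/2) : ℝ)| ≤ 1/2 := abs_sub_round _
    have h2 : (1:ℝ) ≤ |((round (t/2) : ℤ) : ℝ) - (m:ℝ)| := by
      have h' : (1:ℤ) ≤ |round (t/2) - m| := Int.one_le_abs (sub_ne_zero.mpr h)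
      exact_mod_cast h'
    have h3 : |((round (t/2):ℤ):ℝ) - m| ≤ |((round (t/2):ℤ):ℝ) - t/2| + |t/2 - m| := by
      have := abs_sub_le (((round (t/2):ℤ):ℝ)) (t/2) (m:ℝ); linarith
    have h4 : |t - 2*(m:ℝ)| = 2*|t/2 - (m:ℝ)| := by
      rw [show t - 2*(m:ℝ) = 2*(t/2 - m) by ring, abs_mul, abs_two]
    have h5 : tri t = 2 * |t/2 - ((round (t/2):ℤ):ℝ)| := by
      rw [tri, show t - 2*((round (t/2):ℤ):ℝ) = 2*(t/2 - ((round (t/2):ℤ):ℝ)) by ring,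
        abs_mul, abs_two]
    have h6 : |((round (t/2):ℤ):ℝ) - t/2| = |t/2 - ((round (t/2):ℤ):ℝ)| := abs_sub_comm _ _
    linarith

lemma tri_le_one (t : ℝ) : tri t ≤ 1 := by
  have h1 : |t/2 - (round (t/2) : ℝ)| ≤ 1/2 := abs_sub_round _
  have h5 : tri t = 2 * |t/2 - ((round (t/2):ℤ):ℝ)| := by
    rw [tri, show t - 2*((round (t/2):ℤ):ℝ) = 2*(t/2 - ((round (t/2):ℤ):ℝ)) by ring,
      abs_mul, abs_two]
  linarith

lemma tri_lip (s t : ℝ) : |tri s - tri t| ≤ |s - t| := by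
  have h1 : tri s ≤ |s - t| + tri t := by
    calc tri s ≤ |s - 2*((round (t/2):ℤ):ℝ)| := tri_le s _
      _ ≤ |s - t| + |t - 2*((round (t/2):ℤ):ℝ)| := by
          have := abs_sub_le s t (2*((round (t/2):ℤ):ℝ)); linarith
      _ = |s - t| + tri t := by rw [tri]
  have h2 : tri t ≤ |s - t| + tri s := by
    calc tri t ≤ |t - 2*((round (s/2):ℤ):ℝ)| := tri_le t _
      _ ≤ |t - s| + |s - 2*((round (s/2):ℤ):ℝ)| := by
          have := abs_sub_le t s (2*((round (s/2):ℤ):ℝ)); linarith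
      _ = |s - t| + tri s := by rw [tri, abs_sub_comm]
  rw [abs_sub_le_iff]; constructor <;> linarith

lemma tri_eval (p : ℤ) {t : ℝ} (h0 : 0 ≤ t) (h1 : t ≤ 1) :
    tri (2*(p:ℝ) + t) = t := by
  have hhalf : (2*(p:ℝ) + t)/2 = t/2 + (p:ℤ) := by push_cast; ring
  rcases lt_or_eq_of_le h1 with h | h
  · have hr : round (t/2 + (p:ℤ)) = round (t/2) + p := round_add_intCast _ _
    have hr0 : round (t/2) = 0 := by
      rw [round_eq]
      apply Int.floor_eq_zero_iff.mpr
      constructor <;> [skip; skip]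
      · linarith
      · linarith
    rw [tri, hhalf, hr, hr0]
    push_cast
    rw [show 2*(p:ℝ) + t - 2*(0 + (p:ℝ)) = t by ring]
    exact abs_of_nonneg h0
  · subst h
    have hr : round ((1:ℝ)/2 + (p:ℤ)) = round ((1:ℝ)/2) + p := round_add_intCast _ _
    have hr0 : round ((1:ℝ)/2) = 1 := by
      rw [round_eq]; norm_num
    rw [tri, hhalf, hr, hr0]
    push_cast
    rw [show 2*(p:ℝ) + 1 - 2*(1 + (p:ℝ)) = -1 by ring]
    norm_num

lemma tri_zero : tri 0 = 0 := by
  have := tri_eval 0 (le_refl (0:ℝ)) (by norm_num)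
  simpa using this

lemma tri_odd (c : ℤ) : tri (2*(c:ℝ) + 1) = 1 := tri_eval c (by norm_num) (by norm_num)

/-! ### scales -/

def lk (k : ℕ) : ℝ := (2:ℝ) ^ (-(k:ℤ) - 2)

lemma lk_pos (k : ℕ) : 0 < lk k := zpow_pos two_pos _

lemma lk_as_rpow (k : ℕ) : lk k = (2:ℝ) ^ ((-(k:ℝ) - 2) : ℝ) := by
  rw [lk, ← Real.rpow_intCast]
  congr 1
  push_cast; ring

lemma lk_succ (k : ℕ) : lk k = 2 * lk (k+1) := by
  rw [lk, lk, show (-(↑(k+1):ℤ) - 2) = (-(k:ℤ) - 2) - 1 by push_cast; ring,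
    zpow_sub_one₀ (two_ne_zero (α := ℝ))]
  ring

lemma lk_succ' (k : ℕ) : lk (k+1) = lk k / 2 := by
  rw [lk_succ k]; ring

lemma lk_le (k : ℕ) : lk k ≤ 1/4 := by
  have h : lk k ≤ (2:ℝ) ^ (-2:ℤ) := by
    rw [lk]
    apply (zpow_le_zpow_iff_right₀ (by norm_num : (1:ℝ) < 2)).mpr
    omega
  norm_num at h
  linarith

lemma lk_anti {j k : ℕ} (h : j ≤ k) : lk k ≤ lk j := by
  rw [lk, lk]
  apply (zpow_le_zpow_iff_right₀ (by norm_num : (1:ℝ) < 2)).mpr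
  omega

lemma lk_le_pow (k : ℕ) : lk k ≤ (1/2:ℝ)^k := by
  have h : lk k ≤ (2:ℝ) ^ (-(k:ℤ)) := by
    rw [lk]
    apply (zpow_le_zpow_iff_right₀ (by norm_num : (1:ℝ) < 2)).mpr
    omega
  have h2 : (2:ℝ) ^ (-(k:ℤ)) = (1/2:ℝ)^k := by
    rw [zpow_neg, zpow_natCast, one_div, inv_pow]
  linarith

/-! ### lap numbers -/

def NN (a : ℝ) (k : ℕ) : ℕ := 2 * ⌈(2:ℝ) ^ ((k:ℝ) * (a/(1-a)))⌉₊ + 1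

lemma NN_pos (a : ℝ) (k : ℕ) : 0 < NN a k := by rw [NN]; omega

lemma NN_cast (a : ℝ) (k : ℕ) :
    (NN a k : ℝ) = 2 * (⌈(2:ℝ) ^ ((k:ℝ) * (a/(1-a)))⌉₊ : ℝ) + 1 := by
  rw [NN]; push_cast; ring

lemma NN_cast_pos (a : ℝ) (k : ℕ) : (0:ℝ) < (NN a k : ℝ) := by
  exact_mod_cast NN_pos a k

lemma beta_nonneg {a : ℝ} (ha0 : 0 ≤ a) (ha1 : a < 1) : 0 ≤ a / (1-a) := by
  apply div_nonneg ha0; linarith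

lemma pow_beta_one_le {a : ℝ} (ha0 : 0 ≤ a) (ha1 : a < 1) (k : ℕ) :
    1 ≤ (2:ℝ) ^ ((k:ℝ) * (a/(1-a))) := by
  apply Real.one_le_rpow one_le_two
  exact mul_nonneg (Nat.cast_nonneg k) (beta_nonneg ha0 ha1)

lemma NN_ge3 {a : ℝ} (ha0 : 0 ≤ a) (ha1 : a < 1) (k : ℕ) : 3 ≤ NN a k := by
  have h := pow_beta_one_le ha0 ha1 k
  have h2 : 1 ≤ ⌈(2:ℝ) ^ ((k:ℝ) * (a/(1-a)))⌉₊ := Nat.one_le_ceil_iff.mpr (by linarith)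
  rw [NN]; omega

lemma NN_lb (a : ℝ) (k : ℕ) :
    2 * (2:ℝ) ^ ((k:ℝ) * (a/(1-a))) ≤ (NN a k : ℝ) := by
  rw [NN_cast]
  have := Nat.le_ceil ((2:ℝ) ^ ((k:ℝ) * (a/(1-a))))
  linarith

lemma NN_ub {a : ℝ} (ha0 : 0 ≤ a) (ha1 : a < 1) (k : ℕ) :
    (NN a k : ℝ) ≤ 5 * (2:ℝ) ^ ((k:ℝ) * (a/(1-a))) := by
  rw [NN_cast]
  have h1 := pow_beta_one_le ha0 ha1 k
  have h2 := Nat.ceil_lt_add_one (le_trans zero_le_one h1)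
  linarith

def wk (a : ℝ) (k : ℕ) : ℝ := lk k / NN a k

lemma wk_pos (a : ℝ) (k : ℕ) : 0 < wk a k :=
  div_pos (lk_pos k) (NN_cast_pos a k)

lemma lk_eq_N_mul_w (a : ℝ) (k : ℕ) : lk k = (NN a k : ℝ) * wk a k := by
  have hN : (NN a k : ℝ) ≠ 0 := ne_of_gt (NN_cast_pos a k)
  rw [wk]
  field_simp

lemma wk_le_lk (a : ℝ) (k : ℕ) : wk a k ≤ lk k := by
  rw [wk, div_le_iff₀ (NN_cast_pos a k)]
  have h1 : (1:ℝ) ≤ (NN a k : ℝ) := by exact_mod_cast NN_pos a k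
  nlinarith [lk_pos k]

lemma NW_eq (a : ℝ) (k : ℕ) :
    (NN a k : ℝ) * wk a k ^ a = (NN a k : ℝ) ^ (1-a) * lk k ^ a := by
  have hN : (0:ℝ) < (NN a k : ℝ) := NN_cast_pos a k
  rw [wk, Real.div_rpow (le_of_lt (lk_pos k)) (le_of_lt hN),
    Real.rpow_sub hN, Real.rpow_one]
  field_simp

lemma lk_rpow (k : ℕ) (c : ℝ) : lk k ^ c = (2:ℝ) ^ ((-(k:ℝ) - 2) * c) := by
  rw [lk_as_rpow, ← Real.rpow_mul (le_of_lt two_pos)]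

lemma exp_cancel {a : ℝ} (ha1 : a < 1) (k : ℕ) :
    ((k:ℝ) * (a/(1-a))) * (1-a) = (k:ℝ) * a := by
  have h : (1:ℝ) - a ≠ 0 := by intro h'; rw [sub_eq_zero] at h'; exact absurd h'.symm (ne_of_lt ha1)
  field_simp

lemma NW_ub {a : ℝ} (ha0 : 0 ≤ a) (ha1 : a < 1) (k : ℕ) :
    (NN a k : ℝ) * wk a k ^ a ≤ 5 := by
  have hN : (0:ℝ) < (NN a k : ℝ) := NN_cast_pos a k
  rw [NW_eq]
  set β := (k:ℝ) * (a/(1-a)) with hβ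
  have hP : (0:ℝ) < (2:ℝ) ^ β := Real.rpow_pos_of_pos two_pos _
  have h1 : (NN a k:ℝ)^(1-a) ≤ (5 * (2:ℝ)^β)^(1-a) :=
    Real.rpow_le_rpow hN.le (NN_ub ha0 ha1 k) (by linarith)
  have h2 : (5 * (2:ℝ)^β)^(1-a) = (5:ℝ)^(1-a) * ((2:ℝ)^β)^(1-a) :=
    Real.mul_rpow (by norm_num) hP.le
  have h3 : ((2:ℝ)^β)^(1-a) = (2:ℝ)^((k:ℝ)*a) := by
    rw [← Real.rpow_mul (le_of_lt two_pos), exp_cancel ha1]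
  have h4 : lk k ^ a = (2:ℝ)^((-(k:ℝ)-2)*a) := lk_rpow k a
  have h5 : (2:ℝ)^((k:ℝ)*a) * (2:ℝ)^((-(k:ℝ)-2)*a) = (2:ℝ)^(-(2*a)) := by
    rw [← Real.rpow_add two_pos]
    congr 1; ring
  have h6 : (5:ℝ)^(1-a) ≤ 5 := by
    calc (5:ℝ)^(1-a) ≤ (5:ℝ)^(1:ℝ) :=
          Real.rpow_le_rpow_of_exponent_le (by norm_num) (by linarith)
      _ = 5 := Real.rpow_one 5
  have h7 : (2:ℝ)^(-(2*a)) ≤ 1 :=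
    Real.rpow_le_one_of_one_le_of_nonpos one_le_two (by linarith)
  have h8 : (0:ℝ) ≤ lk k ^ a := Real.rpow_nonneg (lk_pos k).le a
  have h9 : (0:ℝ) < (5:ℝ)^(1-a) := Real.rpow_pos_of_pos (by norm_num) _
  have h10 : (0:ℝ) < (2:ℝ)^((k:ℝ)*a) := Real.rpow_pos_of_pos two_pos _
  have h11 : (0:ℝ) < (2:ℝ)^((-(k:ℝ)-2)*a) := Real.rpow_pos_of_pos two_pos _
  calc (NN a k:ℝ)^(1-a) * lk k ^ a ≤ (5 * (2:ℝ)^β)^(1-a) * lk k ^ a := by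
        apply mul_le_mul_of_nonneg_right h1 h8
    _ = (5:ℝ)^(1-a) * ((2:ℝ)^((k:ℝ)*a) * (2:ℝ)^((-(k:ℝ)-2)*a)) := by
        rw [h2, h3, h4]; ring
    _ = (5:ℝ)^(1-a) * (2:ℝ)^(-(2*a)) := by rw [h5]
    _ ≤ 5 * 1 := by nlinarith
    _ = 5 := by ring

lemma NW_lb {a : ℝ} (ha0 : 0 ≤ a) (ha1 : a < 1) (k : ℕ) :
    1/4 ≤ (NN a k : ℝ) * wk a k ^ a := by
  have hN : (0:ℝ) < (NN a k : ℝ) := NN_cast_pos a k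
  rw [NW_eq]
  set β := (k:ℝ) * (a/(1-a)) with hβ
  have hP : (0:ℝ) < (2:ℝ) ^ β := Real.rpow_pos_of_pos two_pos _
  have h1 : (2 * (2:ℝ)^β)^(1-a) ≤ (NN a k:ℝ)^(1-a) :=
    Real.rpow_le_rpow (by positivity) (NN_lb a k) (by linarith)
  have h2 : (2 * (2:ℝ)^β)^(1-a) = (2:ℝ)^(1-a) * ((2:ℝ)^β)^(1-a) :=
    Real.mul_rpow (by norm_num) hP.le
  have h3 : ((2:ℝ)^β)^(1-a) = (2:ℝ)^((k:ℝ)*a) := by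
    rw [← Real.rpow_mul (le_of_lt two_pos), exp_cancel ha1]
  have h4 : lk k ^ a = (2:ℝ)^((-(k:ℝ)-2)*a) := lk_rpow k a
  have h5 : (2:ℝ)^((k:ℝ)*a) * (2:ℝ)^((-(k:ℝ)-2)*a) = (2:ℝ)^(-(2*a)) := by
    rw [← Real.rpow_add two_pos]
    congr 1; ring
  have h6 : (1:ℝ) ≤ (2:ℝ)^(1-a) := by
    apply Real.one_le_rpow one_le_two (by linarith)
  have h7 : (1/4:ℝ) ≤ (2:ℝ)^(-(2*a)) := by
    have h1' : (2:ℝ)^(-2:ℝ) ≤ (2:ℝ)^(-(2*a)) :=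
      Real.rpow_le_rpow_of_exponent_le one_le_two (by linarith)
    have h2' : (2:ℝ) ^ (-2:ℝ) = 1/4 := by
      rw [show (-2:ℝ) = ((-2:ℤ):ℝ) by norm_num, Real.rpow_intCast]
      norm_num
    rw [← h2']
    exact h1'
  have h8 : (0:ℝ) ≤ lk k ^ a := Real.rpow_nonneg (lk_pos k).le a
  have h10 : (0:ℝ) < (2:ℝ)^((k:ℝ)*a) := Real.rpow_pos_of_pos two_pos _
  have h11 : (0:ℝ) < (2:ℝ)^((-(k:ℝ)-2)*a) := Real.rpow_pos_of_pos two_pos _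
  calc (1/4:ℝ) ≤ (2:ℝ)^(1-a) * (2:ℝ)^(-(2*a)) := by nlinarith
    _ = (2 * (2:ℝ)^β)^(1-a) * lk k ^ a := by rw [h2, h3, h4, ← h5]; ring
    _ ≤ (NN a k:ℝ)^(1-a) * lk k ^ a := by apply mul_le_mul_of_nonneg_right h1 h8

lemma wk_ratio {a : ℝ} (ha0 : 0 ≤ a) (ha1 : a < 1) (k : ℕ) :
    (2:ℝ)^(-(a/(1-a))) / 5 * wk a k ≤ wk a (k+1) := by
  set β := a/(1-a) with hβdef
  have hB : (0:ℝ) < (2:ℝ)^β := Real.rpow_pos_of_pos two_pos _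
  have hBneg : (2:ℝ)^(-β) = ((2:ℝ)^β)⁻¹ := Real.rpow_neg (le_of_lt two_pos) β
  have hL : 0 < lk k := lk_pos k
  have hx : (0:ℝ) < (2:ℝ)^((k:ℝ)*β) := Real.rpow_pos_of_pos two_pos _
  have hN0 : 2 * (2:ℝ)^((k:ℝ)*β) ≤ (NN a k : ℝ) := NN_lb a k
  have hN1 : (NN a (k+1) : ℝ) ≤ 5 * (2:ℝ)^(((k+1):ℝ)*β) := by
    have := NN_ub ha0 ha1 (k+1)
    push_cast at this ⊢
    exact this
  have hsplit : (2:ℝ)^(((k:ℝ)+1)*β) = (2:ℝ)^((k:ℝ)*β) * (2:ℝ)^β := by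
    rw [← Real.rpow_add two_pos]
    congr 1; ring
  have hN1' : (NN a (k+1) : ℝ) ≤ 5 * ((2:ℝ)^((k:ℝ)*β) * (2:ℝ)^β) := by
    push_cast at hN1
    rw [hsplit] at hN1
    exact hN1
  have hNk : (0:ℝ) < (NN a k : ℝ) := NN_cast_pos a k
  have hNk1 : (0:ℝ) < (NN a (k+1) : ℝ) := NN_cast_pos a (k+1)
  have hone : (2:ℝ)^(-β) * (2:ℝ)^β = 1 := by
    rw [← Real.rpow_add two_pos]; norm_num
  have key1 : (2:ℝ)^(-β) * lk k * (NN a (k+1):ℝ)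
      ≤ 5 * lk k * (2:ℝ)^((k:ℝ)*β) := by
    calc (2:ℝ)^(-β) * lk k * (NN a (k+1):ℝ)
        ≤ (2:ℝ)^(-β) * lk k * (5 * ((2:ℝ)^((k:ℝ)*β) * (2:ℝ)^β)) := by
          apply mul_le_mul_of_nonneg_left hN1' (by positivity)
      _ = 5 * lk k * (2:ℝ)^((k:ℝ)*β) * ((2:ℝ)^(-β) * (2:ℝ)^β) := by ring
      _ = 5 * lk k * (2:ℝ)^((k:ℝ)*β) := by rw [hone]; ring
  have key2 : 5 * lk k * (2:ℝ)^((k:ℝ)*β) ≤ lk k / 2 * (5 * (NN a k : ℝ)) := by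
    calc 5 * lk k * (2:ℝ)^((k:ℝ)*β) = lk k / 2 * (5 * (2 * (2:ℝ)^((k:ℝ)*β))) := by ring
      _ ≤ lk k / 2 * (5 * (NN a k : ℝ)) := by
          apply mul_le_mul_of_nonneg_left (by linarith) (by positivity)
  rw [wk, wk, lk_succ' k, div_mul_div_comm, div_le_div_iff₀ (by positivity) hNk1]
  calc (2:ℝ)^(-β) * lk k * (NN a (k+1):ℝ) ≤ 5 * lk k * (2:ℝ)^((k:ℝ)*β) := key1
    _ ≤ lk k / 2 * (5 * (NN a k : ℝ)) := key2

lemma wk_small {a : ℝ} (ε : ℝ) (hε : 0 < ε) : ∃ k, wk a k ≤ ε := by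
  obtain ⟨k, hk⟩ := exists_pow_lt_of_lt_one hε (by norm_num : (1/2:ℝ) < 1)
  exact ⟨k, le_trans (le_trans (wk_le_lk a k) (lk_le_pow k)) (le_of_lt hk)⟩



/-! ### the map -/

def idx (x : ℝ) : ℕ := (-Int.log 2 x - 2).toNat

def pc (a : ℝ) (k : ℕ) (x : ℝ) : ℝ := lk k + lk k * tri ((NN a k : ℝ) * (x - lk k) / lk k)

def f (a : ℝ) (x : ℝ) : ℝ :=
  if x ≤ 0 then 0 else if 1/2 ≤ x then x else pc a (idx x) x

lemma lk_zero : lk 0 = 1/4 := by rw [lk]; norm_num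

lemma two_lk (k : ℕ) : 2 * lk k = (2:ℝ) ^ ((-(k:ℤ) - 1) : ℤ) := by
  rw [lk, show (-(k:ℤ)-1) = (-(k:ℤ)-2)+1 by ring, zpow_add_one₀ (two_ne_zero (α:=ℝ))]
  ring

lemma log_eq_of_mem {k : ℕ} {x : ℝ} (hx : x ∈ Ico (lk k) (2 * lk k)) :
    Int.log 2 x = -(k:ℤ) - 2 := by
  have hx0 : 0 < x := lt_of_lt_of_le (lk_pos k) hx.1
  have h1 : ((2:ℕ):ℝ) ^ (Int.log 2 x) ≤ x := Int.zpow_log_le_self (by norm_num) hx0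
  have h2 : x < ((2:ℕ):ℝ) ^ (Int.log 2 x + 1) := Int.lt_zpow_succ_log_self (by norm_num) x
  have hcast : ((2:ℕ):ℝ) = (2:ℝ) := by norm_num
  rw [hcast] at h1 h2
  have hu : (2:ℝ) ^ (Int.log 2 x) < (2:ℝ) ^ ((-(k:ℤ) - 1) : ℤ) :=
    lt_of_le_of_lt h1 (by rw [← two_lk]; exact hx.2)
  have hl : (2:ℝ) ^ ((-(k:ℤ) - 2) : ℤ) < (2:ℝ) ^ (Int.log 2 x + 1) :=
    lt_of_le_of_lt (le_of_eq (by rw [← lk])) (lt_of_le_of_lt hx.1 h2)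
  have hu' := (zpow_lt_zpow_iff_right₀ (by norm_num : (1:ℝ) < 2)).mp hu
  have hl' := (zpow_lt_zpow_iff_right₀ (by norm_num : (1:ℝ) < 2)).mp hl
  omega

lemma idx_eq {k : ℕ} {x : ℝ} (hx : x ∈ Ico (lk k) (2 * lk k)) : idx x = k := by
  rw [idx, log_eq_of_mem hx]
  omega

lemma mem_idx {x : ℝ} (h0 : 0 < x) (h5 : x < 1/2) :
    x ∈ Ico (lk (idx x)) (2 * lk (idx x)) := by
  set m := Int.log 2 x with hm
  have h1 : ((2:ℕ):ℝ) ^ m ≤ x := Int.zpow_log_le_self (by norm_num) h0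
  have h2 : x < ((2:ℕ):ℝ) ^ (m + 1) := Int.lt_zpow_succ_log_self (by norm_num) x
  have hcast : ((2:ℕ):ℝ) = (2:ℝ) := by norm_num
  rw [hcast] at h1 h2
  have hhalf : (1/2:ℝ) = (2:ℝ) ^ (-1 : ℤ) := by norm_num
  have hm2 : m ≤ -2 := by
    have hlt : (2:ℝ)^m < (2:ℝ)^(-1:ℤ) := lt_of_le_of_lt h1 (by rw [← hhalf]; exact h5)
    have := (zpow_lt_zpow_iff_right₀ (by norm_num : (1:ℝ) < 2)).mp hlt
    omega
  have hidx : (idx x : ℤ) = -m - 2 := by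
    rw [idx, hm]
    exact Int.toNat_of_nonneg (by omega)
  constructor
  · rw [lk, show (-(idx x:ℤ) - 2) = m by omega]
    exact h1
  · rw [two_lk, show (-(idx x:ℤ) - 1) = m + 1 by omega]
    exact h2

lemma exists_piece {x : ℝ} (h0 : 0 < x) (h2 : x ≤ 1/2) :
    ∃ k, x ∈ Icc (lk k) (2 * lk k) := by
  rcases lt_or_eq_of_le h2 with h | h
  · exact ⟨idx x, Ico_subset_Icc_self (mem_idx h0 h)⟩
  · refine ⟨0, ?_⟩
    rw [lk_zero]
    constructor <;> [linarith; linarith]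

lemma tri_NN (a : ℝ) (k : ℕ) : tri ((NN a k : ℝ)) = 1 := by
  have h : (NN a k : ℝ) = 2*((⌈(2:ℝ)^((k:ℝ)*(a/(1-a)))⌉₊ : ℤ):ℝ) + 1 := by
    rw [NN_cast]; push_cast; ring
  rw [h]
  exact tri_odd _

lemma pc_left (a : ℝ) (k : ℕ) : pc a k (lk k) = lk k := by
  rw [pc, sub_self, mul_zero, zero_div, tri_zero, mul_zero, add_zero]

lemma pc_right (a : ℝ) (k : ℕ) : pc a k (2 * lk k) = 2 * lk k := by
  have hl : lk k ≠ 0 := (lk_pos k).ne'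
  rw [pc, show 2*lk k - lk k = lk k by ring, mul_div_assoc, div_self hl, mul_one,
    tri_NN]
  ring

lemma pc_mem (a : ℝ) (k : ℕ) (x : ℝ) : pc a k x ∈ Icc (lk k) (2*lk k) := by
  have h0 := tri_nonneg ((NN a k : ℝ) * (x - lk k) / lk k)
  have h1 := tri_le_one ((NN a k : ℝ) * (x - lk k) / lk k)
  have hl := lk_pos k
  constructor
  · rw [pc]; nlinarith
  · rw [pc]; nlinarith

lemma pc_lip (a : ℝ) (k : ℕ) (x y : ℝ) :
    |pc a k x - pc a k y| ≤ (NN a k : ℝ) * |x - y| := by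
  have hl := lk_pos k
  have hN : (0:ℝ) ≤ (NN a k : ℝ) := (NN_cast_pos a k).le
  set u := (NN a k : ℝ) * (x - lk k) / lk k with hu
  set v := (NN a k : ℝ) * (y - lk k) / lk k with hv
  have hpc : pc a k x - pc a k y = lk k * (tri u - tri v) := by rw [pc, pc]; ring
  have huv : u - v = (NN a k:ℝ) * (x - y) / lk k := by
    rw [hu, hv]; field_simp; ring
  calc |pc a k x - pc a k y| = lk k * |tri u - tri v| := by
        rw [hpc, abs_mul, abs_of_pos hl]
    _ ≤ lk k * |u - v| := mul_le_mul_of_nonneg_left (tri_lip u v) hl.le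
    _ = lk k * ((NN a k:ℝ) * |x - y| / lk k) := by
        rw [huv, abs_div, abs_mul, abs_of_pos hl, abs_of_nonneg hN]
    _ = (NN a k : ℝ) * |x - y| := by field_simp

lemma pc_bnd (a : ℝ) (k : ℕ) (x y : ℝ) : |pc a k x - pc a k y| ≤ lk k := by
  have hl := lk_pos k
  set u := (NN a k : ℝ) * (x - lk k) / lk k with hu
  set v := (NN a k : ℝ) * (y - lk k) / lk k with hv
  have hpc : pc a k x - pc a k y = lk k * (tri u - tri v) := by rw [pc, pc]; ring
  have h1 : |tri u - tri v| ≤ 1 := by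
    rw [abs_sub_le_iff]
    constructor
    · linarith [tri_le_one u, tri_nonneg v]
    · linarith [tri_le_one v, tri_nonneg u]
  calc |pc a k x - pc a k y| = lk k * |tri u - tri v| := by
        rw [hpc, abs_mul, abs_of_pos hl]
    _ ≤ lk k * 1 := mul_le_mul_of_nonneg_left h1 hl.le
    _ = lk k := mul_one _

lemma f_zero (a : ℝ) {x : ℝ} (hx : x ≤ 0) : f a x = 0 := if_pos hx

lemma f_id (a : ℝ) {x : ℝ} (hx : 1/2 ≤ x) : f a x = x := by
  rw [f, if_neg (by linarith), if_pos hx]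

lemma f_eq_pc_of_Ico (a : ℝ) {k : ℕ} {x : ℝ} (hx : x ∈ Ico (lk k) (2*lk k)) :
    f a x = pc a k x := by
  have h0 : 0 < x := lt_of_lt_of_le (lk_pos k) hx.1
  have h5 : x < 1/2 := lt_of_lt_of_le hx.2 (by linarith [lk_le k])
  rw [f, if_neg (by linarith), if_neg (by linarith), idx_eq hx]

lemma f_fixl (a : ℝ) (k : ℕ) : f a (lk k) = lk k := by
  rw [f_eq_pc_of_Ico a ⟨le_refl _, by nlinarith [lk_pos k]⟩, pc_left]

lemma f_fixr (a : ℝ) (k : ℕ) : f a (2 * lk k) = 2 * lk k := by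
  cases k with
  | zero =>
    have h : 2 * lk 0 = 1/2 := by rw [lk_zero]; norm_num
    rw [h]
    exact f_id a (le_refl _)
  | succ j =>
    have h2l : 2 * lk (j+1) = lk j := (lk_succ j).symm
    rw [h2l]
    exact f_fixl a j

lemma f_eq_pc (a : ℝ) {k : ℕ} {x : ℝ} (hx : x ∈ Icc (lk k) (2*lk k)) :
    f a x = pc a k x := by
  rcases lt_or_eq_of_le hx.2 with h | h
  · exact f_eq_pc_of_Ico a ⟨hx.1, h⟩
  · rw [h, f_fixr, pc_right]

lemma f_mem_Icc (a : ℝ) {k : ℕ} {x : ℝ} (hx : x ∈ Icc (lk k) (2*lk k)) :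
    f a x ∈ Icc (lk k) (2*lk k) := by
  rw [f_eq_pc a hx]; exact pc_mem a k x

lemma f_mem01 (a : ℝ) {x : ℝ} (hx : x ∈ Icc (0:ℝ) 1) : f a x ∈ Icc (0:ℝ) 1 := by
  by_cases h0 : x ≤ 0
  · rw [f_zero a h0]; constructor <;> norm_num
  by_cases h5 : 1/2 ≤ x
  · rw [f_id a h5]; exact hx
  push_neg at h0 h5
  have hm := mem_idx h0 h5
  rw [f_eq_pc_of_Ico a hm]
  have := pc_mem a (idx x) x
  have l1 := lk_pos (idx x)
  have l2 := lk_le (idx x)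
  constructor
  · linarith [this.1]
  · linarith [this.2]

lemma f_le_two_mul (a : ℝ) {x : ℝ} : f a x ≤ 2 * x ∨ x ≤ 0 := by
  by_cases h0 : x ≤ 0
  · right; exact h0
  by_cases h5 : 1/2 ≤ x
  · left; rw [f_id a h5]; linarith
  push_neg at h0 h5
  left
  have hm := mem_idx h0 h5
  rw [f_eq_pc_of_Ico a hm]
  have := pc_mem a (idx x) x
  have : pc a (idx x) x ≤ 2 * lk (idx x) := this.2
  linarith [hm.1]

lemma le_rpow_self {t c : ℝ} (ht0 : 0 ≤ t) (ht1 : t ≤ 1) (hc : c ≤ 1) : t ≤ t ^ c := by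
  rcases eq_or_lt_of_le ht0 with h | h
  · rw [← h]
    exact Real.rpow_nonneg (le_refl 0) c
  · calc t = t^(1:ℝ) := (Real.rpow_one t).symm
      _ ≤ t^c := Real.rpow_le_rpow_of_exponent_ge h ht1 hc

lemma f_lip_piece (a : ℝ) {k : ℕ} {x y : ℝ} (hx : x ∈ Icc (lk k) (2*lk k))
    (hy : y ∈ Icc (lk k) (2*lk k)) : |f a x - f a y| ≤ (NN a k : ℝ) * |x - y| := by
  rw [f_eq_pc a hx, f_eq_pc a hy]; exact pc_lip a k x y

lemma f_bnd_piece (a : ℝ) {k : ℕ} {x y : ℝ} (hx : x ∈ Icc (lk k) (2*lk k))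
    (hy : y ∈ Icc (lk k) (2*lk k)) : |f a x - f a y| ≤ lk k := by
  rw [f_eq_pc a hx, f_eq_pc a hy]; exact pc_bnd a k x y

lemma f_holder_piece {a : ℝ} (ha0 : 0 ≤ a) (ha1 : a < 1) {k : ℕ} {x y : ℝ}
    (hx : x ∈ Icc (lk k) (2*lk k)) (hy : y ∈ Icc (lk k) (2*lk k)) :
    |f a x - f a y| ≤ 5 * |x - y| ^ (1-a) := by
  rcases eq_or_ne x y with rfl | hne
  · rw [sub_self, abs_zero]
    positivity
  have hD : 0 < |x - y| := abs_pos.mpr (sub_ne_zero.mpr hne)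
  have hw := wk_pos a k
  have hDsplit : |x - y| = |x - y|^a * |x - y|^(1-a) := by
    rw [← Real.rpow_add hD, show a + (1-a) = 1 by ring, Real.rpow_one]
  have hrn : (0:ℝ) ≤ |x - y|^(1-a) := Real.rpow_nonneg hD.le _
  rcases le_or_gt (|x - y|) (wk a k) with h | h
  · calc |f a x - f a y| ≤ (NN a k : ℝ) * |x - y| := f_lip_piece a hx hy
      _ = (NN a k : ℝ) * (|x - y|^a * |x - y|^(1-a)) := by rw [← hDsplit]
      _ ≤ (NN a k : ℝ) * (wk a k^a * |x - y|^(1-a)) := by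
          have h1 : |x - y|^a ≤ wk a k^a := Real.rpow_le_rpow hD.le h ha0
          have h2 : (0:ℝ) ≤ (NN a k : ℝ) := (NN_cast_pos a k).le
          exact mul_le_mul_of_nonneg_left (mul_le_mul_of_nonneg_right h1 hrn) h2
      _ = ((NN a k : ℝ) * wk a k^a) * |x - y|^(1-a) := by ring
      _ ≤ 5 * |x - y|^(1-a) := mul_le_mul_of_nonneg_right (NW_ub ha0 ha1 k) hrn
  · have hwsplit : wk a k = wk a k^a * wk a k^(1-a) := by
      rw [← Real.rpow_add hw, show a + (1-a) = 1 by ring, Real.rpow_one]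
    calc |f a x - f a y| ≤ lk k := f_bnd_piece a hx hy
      _ = ((NN a k : ℝ) * wk a k^a) * wk a k^(1-a) := by
          rw [lk_eq_N_mul_w a k]
          nth_rewrite 1 [hwsplit]
          ring
      _ ≤ 5 * wk a k^(1-a) :=
          mul_le_mul_of_nonneg_right (NW_ub ha0 ha1 k) (Real.rpow_nonneg hw.le _)
      _ ≤ 5 * |x - y|^(1-a) := by
          have := Real.rpow_le_rpow hw.le h.le (by linarith : (0:ℝ) ≤ 1 - a)
          linarith

lemma f_holder_low {a : ℝ} (ha0 : 0 ≤ a) (ha1 : a < 1) {x y : ℝ}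
    (hy0 : 0 < y) (hyx : y ≤ x) (hx5 : x ≤ 1/2) :
    |f a x - f a y| ≤ 11 * (x - y) ^ (1-a) := by
  have hα0 : (0:ℝ) ≤ 1 - a := by linarith
  have hα1 : (1:ℝ) - a ≤ 1 := by linarith
  have hxy0 : 0 ≤ x - y := by linarith
  have hrn : (0:ℝ) ≤ (x-y)^(1-a) := Real.rpow_nonneg hxy0 _
  obtain ⟨k, hk⟩ := exists_piece (lt_of_lt_of_le hy0 hyx) hx5
  obtain ⟨j, hj⟩ := exists_piece hy0 (le_trans hyx hx5)
  rcases lt_trichotomy k j with hkj | hkj | hjk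
  · -- k < j : telescope
    have hkj1 : k+1 ≤ j := hkj
    have h2lkj : 2 * lk j ≤ lk k := by
      have := lk_anti hkj1
      rw [lk_succ k]
      linarith
    have hmidnn : 0 ≤ lk k - 2 * lk j := by linarith
    have hlkx : lk k ≤ x := hk.1
    have hy2lkj : y ≤ 2 * lk j := hj.2
    have h2lkjx : 2 * lk j ≤ x := le_trans h2lkj hlkx
    have hylkk : y ≤ lk k := le_trans hy2lkj h2lkj
    have hlkmem : lk k ∈ Icc (lk k) (2 * lk k) := ⟨le_refl _, by nlinarith [lk_pos k]⟩
    have h2lkmem : 2 * lk j ∈ Icc (lk j) (2 * lk j) := ⟨by nlinarith [lk_pos j], le_refl _⟩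
    have T1 : |f a x - f a (lk k)| ≤ 5 * (x - lk k)^(1-a) := by
      have e := f_holder_piece ha0 ha1 hk hlkmem
      rwa [abs_of_nonneg (by linarith : (0:ℝ) ≤ x - lk k)] at e
    have T3 : |f a (2 * lk j) - f a y| ≤ 5 * (2 * lk j - y)^(1-a) := by
      have e := f_holder_piece ha0 ha1 h2lkmem hj
      rwa [abs_of_nonneg (by linarith : (0:ℝ) ≤ 2 * lk j - y)] at e
    have m1 : (x - lk k)^(1-a) ≤ (x - y)^(1-a) :=
      Real.rpow_le_rpow (by linarith) (by linarith) hα0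
    have m3 : (2 * lk j - y)^(1-a) ≤ (x - y)^(1-a) :=
      Real.rpow_le_rpow (by linarith) (by linarith) hα0
    have hmid : |f a (lk k) - f a (2 * lk j)| = lk k - 2 * lk j := by
      rw [f_fixl, f_fixr, abs_of_nonneg hmidnn]
    have hxy1 : x - y ≤ 1 := by linarith
    have midle : lk k - 2 * lk j ≤ (x - y)^(1-a) := by
      have t2 : x - y ≤ (x - y)^(1-a) := le_rpow_self hxy0 hxy1 hα1
      linarith
    have tri1 : |f a x - f a y| ≤ |f a x - f a (lk k)| + |f a (lk k) - f a (2*lk j)|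
        + |f a (2*lk j) - f a y| := by
      have A := abs_sub_le (f a x) (f a (lk k)) (f a y)
      have B := abs_sub_le (f a (lk k)) (f a (2*lk j)) (f a y)
      linarith
    rw [hmid] at tri1
    linarith
  · -- k = j
    subst hkj
    have h := f_holder_piece ha0 ha1 hk hj
    rw [abs_of_nonneg (by linarith : (0:ℝ) ≤ x - y)] at h
    linarith
  · -- j < k : forces x = y
    have hjk1 : j+1 ≤ k := hjk
    have h2lkk : 2 * lk k ≤ lk j := by
      have := lk_anti hjk1
      rw [lk_succ j]
      linarith
    have hxy : x = y := le_antisymm (le_trans hk.2 (le_trans h2lkk hj.1)) hyx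
    rw [hxy, sub_self, abs_zero, sub_self]
    exact mul_nonneg (by norm_num) (Real.rpow_nonneg le_rfl _)

lemma f_holder_ord {a : ℝ} (ha0 : 0 ≤ a) (ha1 : a < 1) {x y : ℝ}
    (hx : x ∈ Icc (0:ℝ) 1) (hy : y ∈ Icc (0:ℝ) 1) (hyx : y ≤ x) :
    |f a x - f a y| ≤ 13 * (x - y) ^ (1-a) := by
  have hα0 : (0:ℝ) ≤ 1 - a := by linarith
  have hα1 : (1:ℝ) - a ≤ 1 := by linarith
  have hxy0 : (0:ℝ) ≤ x - y := by linarith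
  have hrn : (0:ℝ) ≤ (x-y)^(1-a) := Real.rpow_nonneg hxy0 _
  by_cases hx0 : x ≤ 0
  · have hy0 : y ≤ 0 := le_trans hyx hx0
    rw [f_zero a hx0, f_zero a hy0, sub_self, abs_zero]
    positivity
  push_neg at hx0
  by_cases hy0 : y ≤ 0
  · rw [f_zero a hy0, sub_zero]
    have hfx0 : 0 ≤ f a x := (f_mem01 a hx).1
    rw [abs_of_nonneg hfx0]
    have h2x : f a x ≤ 2 * x := by
      rcases f_le_two_mul a (x := x) with h | h
      · exact h
      · linarith
    have hxx : x ≤ x^(1-a) := le_rpow_self hx0.le hx.2 hα1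
    have hxxy : x^(1-a) ≤ (x-y)^(1-a) := Real.rpow_le_rpow hx0.le (by linarith) hα0
    linarith
  push_neg at hy0
  by_cases hy5 : 1/2 ≤ y
  · rw [f_id a (le_trans hy5 hyx), f_id a hy5]
    rw [abs_of_nonneg hxy0]
    have := le_rpow_self hxy0 (by linarith [hx.2, hy.1] : x - y ≤ 1) hα1
    linarith
  push_neg at hy5
  by_cases hx5 : x ≤ 1/2
  · have h := f_holder_low ha0 ha1 hy0 hyx hx5
    linarith
  push_neg at hx5
  have T1 : |f a x - f a (1/2)| = x - 1/2 := by
    rw [f_id a hx5.le, f_id a (le_refl _), abs_of_nonneg (by linarith)]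
  have T2 : |f a (1/2) - f a y| ≤ 11 * (1/2 - y)^(1-a) :=
    f_holder_low ha0 ha1 hy0 hy5.le (le_refl _)
  have m2 : (1/2 - y:ℝ)^(1-a) ≤ (x - y)^(1-a) :=
    Real.rpow_le_rpow (by linarith) (by linarith) hα0
  have m1 : x - 1/2 ≤ (x-y)^(1-a) := by
    have t2 : x - y ≤ (x - y)^(1-a) :=
      le_rpow_self hxy0 (by linarith [hx.2] : x - y ≤ 1) hα1
    linarith
  have tri1 : |f a x - f a y| ≤ |f a x - f a (1/2)| + |f a (1/2) - f a y| :=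
    abs_sub_le _ _ _
  rw [T1] at tri1
  linarith

lemma f_holder {a : ℝ} (ha0 : 0 ≤ a) (ha1 : a < 1) {x y : ℝ}
    (hx : x ∈ Icc (0:ℝ) 1) (hy : y ∈ Icc (0:ℝ) 1) :
    |f a x - f a y| ≤ 13 * |x - y| ^ (1-a) := by
  rcases le_total y x with h | h
  · rw [abs_of_nonneg (by linarith : (0:ℝ) ≤ x - y)]
    exact f_holder_ord ha0 ha1 hx hy h
  · rw [abs_sub_comm, abs_of_nonpos (by linarith : x - y ≤ 0), neg_sub]
    exact f_holder_ord ha0 ha1 hy hx h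

/-! ### dynamics -/

def phim (a : ℝ) : unitInterval → unitInterval := fun x => ⟨f a (x:ℝ), f_mem01 a x.2⟩

lemma iter_coe (a : ℝ) (x : unitInterval) (i : ℕ) :
    (((phim a)^[i] x : unitInterval) : ℝ) = (f a)^[i] (x:ℝ) := by
  induction i with
  | zero => simp
  | succ n ih =>
    rw [Function.iterate_succ_apply', Function.iterate_succ_apply', ← ih]
    rfl

lemma iter_piece (a : ℝ) {k : ℕ} {x : ℝ} (hx : x ∈ Icc (lk k) (2*lk k)) (i : ℕ) :
    (f a)^[i] x ∈ Icc (lk k) (2*lk k) := by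
  induction i with
  | zero => exact hx
  | succ n ih =>
    rw [Function.iterate_succ_apply']
    exact f_mem_Icc a ih

lemma iter_lip (a : ℝ) {k : ℕ} {x y : ℝ} (hx : x ∈ Icc (lk k) (2*lk k))
    (hy : y ∈ Icc (lk k) (2*lk k)) (i : ℕ) :
    |(f a)^[i] x - (f a)^[i] y| ≤ (NN a k:ℝ)^i * |x - y| := by
  induction i with
  | zero => simp
  | succ n ih =>
    rw [Function.iterate_succ_apply', Function.iterate_succ_apply']
    calc |f a ((f a)^[n] x) - f a ((f a)^[n] y)|
        ≤ (NN a k:ℝ) * |(f a)^[n] x - (f a)^[n] y| :=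
          f_lip_piece a (iter_piece a hx n) (iter_piece a hy n)
      _ ≤ (NN a k:ℝ) * ((NN a k:ℝ)^n * |x - y|) :=
          mul_le_mul_of_nonneg_left ih (NN_cast_pos a k).le
      _ = (NN a k:ℝ)^(n+1) * |x - y| := by ring

lemma iter_zero (a : ℝ) (i : ℕ) : (f a)^[i] 0 = 0 := by
  induction i with
  | zero => rfl
  | succ n ih =>
    rw [Function.iterate_succ_apply', ih]
    exact f_zero a (le_refl 0)

lemma iter_id (a : ℝ) {x : ℝ} (hx : 1/2 ≤ x) (i : ℕ) : (f a)^[i] x = x := by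
  induction i with
  | zero => rfl
  | succ n ih =>
    rw [Function.iterate_succ_apply, f_id a hx, ih]

/-! ### counting lemmas -/

open Finset in
lemma count_sep_interval {A : Finset unitInterval} {u v δ : ℝ} (hδ : 0 < δ) (huv : u ≤ v)
    (hmem : ∀ x ∈ A, (x:ℝ) ∈ Icc u v)
    (hsep : ∀ x ∈ A, ∀ y ∈ A, x ≠ y → δ < |(x:ℝ) - (y:ℝ)|) :
    (A.card : ℝ) ≤ (v - u)/δ + 1 := by
  classical
  have hfl0 : (0:ℤ) ≤ ⌊(v-u)/δ⌋ := Int.floor_nonneg.mpr (div_nonneg (by linarith) hδ.le)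
  have hgcard : A.card ≤ (Finset.Icc (0:ℤ) ⌊(v-u)/δ⌋).card := by
    refine Finset.card_le_card_of_injOn
      (fun x : unitInterval => ⌊((x:ℝ) - u)/δ⌋) ?_ ?_
    · intro x hx
      rw [Finset.mem_coe, Finset.mem_Icc]
      constructor
      · exact Int.floor_nonneg.mpr (div_nonneg (by linarith [(hmem x hx).1]) hδ.le)
      · apply Int.floor_le_floor
        apply div_le_div_of_nonneg_right _ hδ.le  -- ((x-u) ≤ (v-u))
        linarith [(hmem x hx).2]
    · intro x hx y hy hxy
      by_contra hne
      have h1 := hsep x hx y hy hne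
      have h2 : |((x:ℝ) - u)/δ - ((y:ℝ) - u)/δ| < 1 :=
        Int.abs_sub_lt_one_of_floor_eq_floor hxy
      rw [div_sub_div_same, show ((x:ℝ) - u) - ((y:ℝ) - u) = (x:ℝ) - (y:ℝ) by ring] at h2
      rw [abs_div, abs_of_pos hδ, div_lt_one hδ] at h2
      linarith
  have h1 : ((Finset.Icc (0:ℤ) ⌊(v-u)/δ⌋).card : ℤ) = ⌊(v-u)/δ⌋ + 1 := by
    rw [Int.card_Icc]; omega
  have hcard : ((Finset.Icc (0:ℤ) ⌊(v-u)/δ⌋).card : ℝ) = (⌊(v-u)/δ⌋ : ℝ) + 1 := by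
    exact_mod_cast h1
  have := Int.floor_le ((v-u)/δ)
  calc (A.card : ℝ) ≤ ((Finset.Icc (0:ℤ) ⌊(v-u)/δ⌋).card : ℝ) := by exact_mod_cast hgcard
    _ = (⌊(v-u)/δ⌋ : ℝ) + 1 := hcard
    _ ≤ (v-u)/δ + 1 := by linarith

open Finset in
lemma count_sep_itin (a : ℝ) {A : Finset unitInterval} {n : ℕ} (hn : 1 ≤ n) {u v ε : ℝ}
    (hε : 0 < ε) (huv : u ≤ v)
    (horb : ∀ x ∈ A, ∀ i < n, (f a)^[i] (x:ℝ) ∈ Icc u v)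
    (hsep : ∀ x ∈ A, ∀ y ∈ A, x ≠ y → ∃ i < n, ε < |(f a)^[i] (x:ℝ) - (f a)^[i] (y:ℝ)|) :
    (A.card : ℝ) ≤ ((⌈(v - u)/ε⌉₊ + 1 : ℕ) : ℝ)^n := by
  classical
  set P : ℕ := ⌈(v - u)/ε⌉₊ + 1 with hP
  have hPpos : 0 < P := by omega
  have hfloorlt : ∀ x ∈ A, ∀ i, i < n → ⌊((f a)^[i] (x:ℝ) - u)/ε⌋₊ < P := by
    intro x hx i hi
    have h1 : ((f a)^[i] (x:ℝ) - u)/ε ≤ (v - u)/ε :=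
      div_le_div_of_nonneg_right (by linarith [(horb x hx i hi).2]) hε.le
    have h2 : ⌊((f a)^[i] (x:ℝ) - u)/ε⌋₊ ≤ ⌊(v - u)/ε⌋₊ :=
      Nat.floor_le_floor h1
    have h3 : ⌊(v - u)/ε⌋₊ ≤ ⌈(v - u)/ε⌉₊ := Nat.floor_le_ceil _
    omega
  have hinj : Set.InjOn
      (fun x : unitInterval => fun i : Fin n =>
        (⟨min (⌊((f a)^[i.val] (x:ℝ) - u)/ε⌋₊) (P-1), by omega⟩ : Fin P)) A := by
    intro x hx y hy hxy
    by_contra hne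
    obtain ⟨i, hi, hgt⟩ := hsep x hx y hy hne
    have hfx := hfloorlt x hx i hi
    have hfy := hfloorlt y hy i hi
    have := congrFun hxy ⟨i, hi⟩
    simp only [Fin.mk.injEq] at this
    rw [min_eq_left (by omega), min_eq_left (by omega)] at this
    -- equal Nat floors force distance < ε
    set q1 := ((f a)^[i] (x:ℝ) - u)/ε with hq1
    set q2 := ((f a)^[i] (y:ℝ) - u)/ε with hq2
    have hq1nn : 0 ≤ q1 := div_nonneg (by linarith [(horb x hx i hi).1]) hε.le
    have hq2nn : 0 ≤ q2 := div_nonneg (by linarith [(horb y hy i hi).1]) hε.le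
    have l1 : q1 < ⌊q1⌋₊ + 1 := Nat.lt_floor_add_one q1
    have l2 : q2 < ⌊q2⌋₊ + 1 := Nat.lt_floor_add_one q2
    have l3 : (⌊q1⌋₊ : ℝ) ≤ q1 := Nat.floor_le hq1nn
    have l4 : (⌊q2⌋₊ : ℝ) ≤ q2 := Nat.floor_le hq2nn
    have l5 : (⌊q1⌋₊ : ℝ) = (⌊q2⌋₊ : ℝ) := by exact_mod_cast this
    have habs : |q1 - q2| < 1 := by
      rw [abs_lt]; constructor <;> linarith
    have : |(f a)^[i] (x:ℝ) - (f a)^[i] (y:ℝ)| < ε := by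
      have : q1 - q2 = ((f a)^[i] (x:ℝ) - (f a)^[i] (y:ℝ))/ε := by
        rw [hq1, hq2]; ring
      rw [this, abs_div, abs_of_pos hε, div_lt_one hε] at habs
      exact habs
    linarith
  have hcard : A.card ≤ P^n := by
    calc A.card ≤ (Finset.univ : Finset (Fin n → Fin P)).card :=
          Finset.card_le_card_of_injOn _ (fun x _ => Finset.mem_univ _) hinj
      _ = P^n := by
          rw [Finset.card_univ, Fintype.card_fun, Fintype.card_fin, Fintype.card_fin]
  calc (A.card : ℝ) ≤ ((P^n : ℕ) : ℝ) := by exact_mod_cast hcard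
    _ = ((P:ℕ):ℝ)^n := by push_cast; ring

open Finset in
lemma count_sep_lip (a : ℝ) {A : Finset unitInterval} {n : ℕ} (hn : 1 ≤ n) {k : ℕ} {ε : ℝ}
    (hε : 0 < ε)
    (hmem : ∀ x ∈ A, (x:ℝ) ∈ Icc (lk k) (2*lk k))
    (hsep : ∀ x ∈ A, ∀ y ∈ A, x ≠ y → ∃ i < n, ε < |(f a)^[i] (x:ℝ) - (f a)^[i] (y:ℝ)|) :
    (A.card : ℝ) ≤ lk k * (NN a k:ℝ)^(n-1)/ε + 1 := by
  have hNpos : (0:ℝ) < (NN a k:ℝ) := NN_cast_pos a k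
  have hN1 : (1:ℝ) ≤ (NN a k:ℝ) := by
    have := NN_pos a k; exact_mod_cast this
  have hNp : (0:ℝ) < (NN a k:ℝ)^(n-1) := pow_pos hNpos _
  have key := count_sep_interval (A := A) (u := lk k) (v := 2*lk k)
    (δ := ε/(NN a k:ℝ)^(n-1)) (div_pos hε hNp) (by nlinarith [lk_pos k]) hmem ?_
  · calc (A.card:ℝ) ≤ (2*lk k - lk k)/(ε/(NN a k:ℝ)^(n-1)) + 1 := key
      _ = lk k * (NN a k:ℝ)^(n-1)/ε + 1 := by
          rw [show 2*lk k - lk k = lk k by ring, div_div_eq_mul_div]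
  · intro x hx y hy hxy
    obtain ⟨i, hi, hgt⟩ := hsep x hx y hy hxy
    have hle := iter_lip a (hmem x hx) (hmem y hy) i
    have hpow : (NN a k:ℝ)^i ≤ (NN a k:ℝ)^(n-1) :=
      pow_le_pow_right₀ hN1 (by omega)
    have h2 : ε < (NN a k:ℝ)^(n-1) * |(x:ℝ) - (y:ℝ)| := by
      have h3 : (NN a k:ℝ)^i * |(x:ℝ) - (y:ℝ)| ≤ (NN a k:ℝ)^(n-1) * |(x:ℝ) - (y:ℝ)| :=
        mul_le_mul_of_nonneg_right hpow (abs_nonneg _)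
      linarith
    rw [div_lt_iff₀ hNp]
    linarith [h2, mul_comm ((NN a k:ℝ)^(n-1)) (|(x:ℝ) - (y:ℝ)|)]

/-! ### sepNum machinery -/

def SepSet (a : ℝ) (n : ℕ) (ε : ℝ) : Set ℕ :=
  {m : ℕ | ∃ A : Finset unitInterval,
    (∀ x ∈ A, ∀ y ∈ A, x ≠ y → ∃ i < n, ε < dI ((phim a)^[i] x) ((phim a)^[i] y)) ∧ A.card = m}

lemma sepNum_eq (a : ℝ) (n : ℕ) (ε : ℝ) :
    sepNum dI (phim a) n ε = sSup (SepSet a n ε) := rfl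

lemma dI_iter (a : ℝ) (x y : unitInterval) (i : ℕ) :
    dI ((phim a)^[i] x) ((phim a)^[i] y) = |(f a)^[i] (x:ℝ) - (f a)^[i] (y:ℝ)| := by
  rw [dI, iter_coe, iter_coe]

lemma iter01 (a : ℝ) {x : ℝ} (hx : x ∈ Icc (0:ℝ) 1) (i : ℕ) :
    (f a)^[i] x ∈ Icc (0:ℝ) 1 := by
  induction i with
  | zero => exact hx
  | succ n ih => rw [Function.iterate_succ_apply']; exact f_mem01 a ih

lemma card_le_of_sep (a : ℝ) {n : ℕ} (hn : 1 ≤ n) {ε : ℝ} (hε : 0 < ε)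
    {A : Finset unitInterval}
    (hA : ∀ x ∈ A, ∀ y ∈ A, x ≠ y → ∃ i < n, ε < dI ((phim a)^[i] x) ((phim a)^[i] y)) :
    A.card ≤ (⌈(1 - 0)/ε⌉₊ + 1)^n := by
  have h := count_sep_itin a hn hε (by norm_num : (0:ℝ) ≤ 1)
    (fun x hx i _ => iter01 a x.2 i)
    (fun x hx y hy hxy => by
      obtain ⟨i, hi, hgt⟩ := hA x hx y hy hxy
      exact ⟨i, hi, by rwa [dI_iter] at hgt⟩)
  exact_mod_cast h

lemma sepSet_bdd (a : ℝ) {ε : ℝ} (hε : 0 < ε) (n : ℕ) : BddAbove (SepSet a n ε) := by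
  rcases Nat.eq_zero_or_pos n with rfl | hn
  · refine ⟨1, fun m hm => ?_⟩
    obtain ⟨A, hA, hcard⟩ := hm
    rw [← hcard]
    apply Finset.card_le_one.mpr
    intro x hx y hy
    by_contra hne
    obtain ⟨i, hi, _⟩ := hA x hx y hy hne
    omega
  · refine ⟨(⌈(1 - 0)/ε⌉₊ + 1)^n, fun m hm => ?_⟩
    obtain ⟨A, hA, hcard⟩ := hm
    rw [← hcard]
    exact card_le_of_sep a hn hε hA

lemma one_mem_sepSet (a : ℝ) (n : ℕ) (ε : ℝ) : 1 ∈ SepSet a n ε := by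
  refine ⟨{0}, ?_, Finset.card_singleton _⟩
  intro x hx y hy hxy
  rw [Finset.mem_singleton] at hx hy
  exact absurd (hx.trans hy.symm) hxy

lemma sepNum_ge_one (a : ℝ) {ε : ℝ} (hε : 0 < ε) (n : ℕ) :
    1 ≤ sepNum dI (phim a) n ε := by
  rw [sepNum_eq]
  exact le_csSup (sepSet_bdd a hε n) (one_mem_sepSet a n ε)

/-! ### upper bound -/

def BB (a ε : ℝ) : ℝ := 7 * ε^(-a)

def k0e (ε : ℝ) : ℕ := ⌈Real.logb 2 ε⁻¹⌉₊ + 1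

def QQ (ε : ℝ) : ℝ := (k0e ε + 2) * (1/ε + 3)

lemma eps_rpow_ge_one {a ε : ℝ} (ha0 : 0 ≤ a) (hε : 0 < ε) (hε1 : ε < 1) :
    1 ≤ ε^(-a) :=
  Real.one_le_rpow_of_pos_of_le_one_of_nonpos hε hε1.le (by linarith)

lemma BB_pos {a ε : ℝ} (hε : 0 < ε) : 0 < BB a ε := by
  rw [BB]; positivity

lemma BB_ge_seven {a ε : ℝ} (ha0 : 0 ≤ a) (hε : 0 < ε) (hε1 : ε < 1) : 7 ≤ BB a ε := by
  rw [BB]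
  nlinarith [eps_rpow_ge_one ha0 hε hε1]

lemma hk0 {ε : ℝ} (hε : 0 < ε) (hε1 : ε < 1) : 2 * lk (k0e ε) ≤ ε := by
  set L := Real.logb 2 ε⁻¹ with hL
  have hL0 : 0 ≤ L := Real.logb_nonneg (by norm_num) ((one_le_inv₀ hε).mpr hε1.le)
  have hk : L ≤ (k0e ε : ℝ) := by
    rw [k0e]
    push_cast
    linarith [Nat.le_ceil L]
  have h1 : 2 * lk (k0e ε) = (2:ℝ)^(-(k0e ε : ℝ) - 1) := by
    rw [two_lk, ← Real.rpow_intCast]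
    congr 1
    push_cast
    ring
  have h2 : (2:ℝ)^(-(k0e ε : ℝ) - 1) ≤ (2:ℝ)^(-L) :=
    Real.rpow_le_rpow_of_exponent_le one_le_two (by linarith)
  have h3 : (2:ℝ)^(-L) = ε := by
    rw [Real.rpow_neg (by norm_num : (0:ℝ) ≤ 2), hL,
      Real.rpow_logb (by norm_num) (by norm_num) (inv_pos.mpr hε), inv_inv]
  linarith [h1, h2, h3, le_of_eq h1]

lemma NN_le_BB {a ε : ℝ} (ha0 : 0 ≤ a) (ha1 : a < 1) {k : ℕ} {ε' : ℝ}
    (hε : 0 < ε) (hwk : ε ≤ wk a k) (hdummy : ε' = ε) :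
    (NN a k : ℝ) ≤ 5 * ε^(-a) := by
  have hw := wk_pos a k
  have h1 : ε^a ≤ wk a k^a := Real.rpow_le_rpow hε.le hwk ha0
  have h2 : (NN a k:ℝ) * wk a k ^a ≤ 5 := NW_ub ha0 ha1 k
  have hea : 0 < ε^a := Real.rpow_pos_of_pos hε a
  have h3 : (NN a k:ℝ) * ε^a ≤ 5 := by
    nlinarith [NN_cast_pos a k]
  rw [Real.rpow_neg hε.le, ← div_eq_mul_inv]
  exact (le_div_iff₀ hea).mpr h3

lemma lk_div_le {a ε : ℝ} (ha0 : 0 ≤ a) (ha1 : a < 1) {k : ℕ}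
    (hε : 0 < ε) (hwk : wk a k < ε) :
    lk k / ε ≤ 5 * ε^(-a) := by
  have hw := wk_pos a k
  have h2 : (NN a k:ℝ) * wk a k ^a ≤ 5 := NW_ub ha0 ha1 k
  have hsplit : wk a k = wk a k^a * wk a k^(1-a) := by
    rw [← Real.rpow_add hw, show a + (1-a) = 1 by ring, Real.rpow_one]
  have h3 : lk k ≤ 5 * wk a k^(1-a) := by
    calc lk k = ((NN a k:ℝ) * wk a k^a) * wk a k^(1-a) := by
          rw [lk_eq_N_mul_w a k]
          nth_rewrite 1 [hsplit]
          ring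
      _ ≤ 5 * wk a k^(1-a) :=
          mul_le_mul_of_nonneg_right h2 (Real.rpow_nonneg hw.le _)
  have h4 : wk a k^(1-a) ≤ ε^(1-a) :=
    Real.rpow_le_rpow hw.le hwk.le (by linarith)
  have h5 : ε^(-a) = ε^(1-a) / ε := by
    rw [show -a = (1-a) - 1 by ring, Real.rpow_sub hε, Real.rpow_one]
  calc lk k / ε ≤ 5 * ε^(1-a) / ε := by
        apply div_le_div_of_nonneg_right _ hε.le
        linarith
    _ = 5 * (ε^(1-a) / ε) := by ring
    _ = 5 * ε^(-a) := by rw [h5]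

set_option maxHeartbeats 1000000 in
lemma card_bound_main {a : ℝ} (ha0 : 0 ≤ a) (ha1 : a < 1) {ε : ℝ} (hε : 0 < ε)
    (hε1 : ε < 1) {n : ℕ} (hn : 1 ≤ n) {A : Finset unitInterval}
    (hA : ∀ x ∈ A, ∀ y ∈ A, x ≠ y → ∃ i < n, ε < dI ((phim a)^[i] x) ((phim a)^[i] y)) :
    (A.card : ℝ) ≤ QQ ε * (BB a ε)^n := by
  classical
  set k0 := k0e ε with hk0def
  have h2lk0 : 2 * lk k0 ≤ ε := hk0 hε hε1
  have hBB1 : (1:ℝ) ≤ BB a ε := by linarith [BB_ge_seven ha0 hε hε1]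
  have hBBn1 : (1:ℝ) ≤ (BB a ε)^n := one_le_pow₀ hBB1
  have hBBn0 : (0:ℝ) ≤ (BB a ε)^n := by linarith
  -- classification
  set c : unitInterval → ℕ := fun x =>
    if (1:ℝ)/2 ≤ (x:ℝ) then k0+1 else if (x:ℝ) ≤ 0 then k0 else min (idx (x:ℝ)) k0
    with hcdef
  have hcmem : ∀ x ∈ A, c x ∈ Finset.range (k0+2) := by
    intro x _
    rw [Finset.mem_range]
    simp only [hcdef]
    split
    · omega
    · split
      · omega
      · have := min_le_right (idx (x:ℝ)) k0; omega
  have hsum := Finset.card_eq_sum_card_fiberwise hcmem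
  -- fiberwise bound
  have hfiber : ∀ b ∈ Finset.range (k0+2),
      ((A.filter (fun x => c x = b)).card : ℝ) ≤ (1/ε + 3) * (BB a ε)^n := by
    intro b hb
    set B := A.filter (fun x => c x = b) with hBdef
    have hBsub : ∀ x ∈ B, x ∈ A ∧ c x = b := by
      intro x hx
      rw [hBdef, Finset.mem_filter] at hx
      exact hx
    have hsepB : ∀ x ∈ B, ∀ y ∈ B, x ≠ y →
        ∃ i < n, ε < |(f a)^[i] (x:ℝ) - (f a)^[i] (y:ℝ)| := by
      intro x hx y hy hxy
      obtain ⟨i, hi, hgt⟩ := hA x (hBsub x hx).1 y (hBsub y hy).1 hxy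
      exact ⟨i, hi, by rwa [dI_iter] at hgt⟩
    rcases Nat.lt_or_ge b k0 with hbk | hbk
    · -- piece fiber
      have hmemB : ∀ x ∈ B, (x:ℝ) ∈ Ico (lk b) (2 * lk b) := by
        intro x hx
        have hc := (hBsub x hx).2
        simp only [hcdef] at hc
        split at hc
        · omega
        · split at hc
          · omega
          · rename_i h1 h2
            push_neg at h1 h2
            have hidx : idx (x:ℝ) = b := by omega
            rw [← hidx]
            exact mem_idx h2 h1
      have hmemB' : ∀ x ∈ B, (x:ℝ) ∈ Icc (lk b) (2 * lk b) :=
        fun x hx => Ico_subset_Icc_self (hmemB x hx)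
      rcases le_or_gt ε (wk a b) with hwb | hwb
      · -- Lipschitz count
        have hcount := count_sep_lip a hn hε hmemB' hsepB
        have hNle : (NN a b : ℝ) ≤ BB a ε := by
          have := NN_le_BB ha0 ha1 (k := b) hε hwb rfl
          rw [BB]
          nlinarith [eps_rpow_ge_one ha0 hε hε1]
        have hNn : (NN a b:ℝ)^(n-1) ≤ (BB a ε)^(n-1) :=
          pow_le_pow_left₀ (NN_cast_pos a b).le hNle _
        have hBn : (BB a ε)^(n-1) ≤ (BB a ε)^n :=
          pow_le_pow_right₀ hBB1 (by omega)
        have hlk1 : lk b ≤ 1 := by linarith [lk_le b]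
        calc ((B.card:ℝ)) ≤ lk b * (NN a b:ℝ)^(n-1)/ε + 1 := hcount
          _ ≤ (BB a ε)^n / ε + 1 := by
              have hp : (0:ℝ) < (NN a b:ℝ)^(n-1) := pow_pos (NN_cast_pos a b) _
              have : lk b * (NN a b:ℝ)^(n-1) ≤ (BB a ε)^n := by
                nlinarith [lk_pos b]
              have := div_le_div_of_nonneg_right this hε.le
              linarith
          _ ≤ (1/ε + 3) * (BB a ε)^n := by
              have h12 : (0:ℝ) ≤ 3 * (BB a ε)^n - 3 := by nlinarith
              rw [div_eq_mul_inv, one_div]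
              nlinarith [mul_pos (inv_pos.mpr hε) (lt_of_lt_of_le one_pos hBBn1)]
      · -- itinerary count
        have horbB : ∀ x ∈ B, ∀ i < n, (f a)^[i] (x:ℝ) ∈ Icc (lk b) (2*lk b) :=
          fun x hx i _ => iter_piece a (hmemB' x hx) i
        have hcount := count_sep_itin a hn hε (by nlinarith [lk_pos b]) horbB hsepB
        have hPle : ((⌈(2*lk b - lk b)/ε⌉₊ + 1 : ℕ) : ℝ) ≤ BB a ε := by
          have hq : (0:ℝ) ≤ (2*lk b - lk b)/ε := by
            apply div_nonneg _ hε.le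
            nlinarith [lk_pos b]
          have hceil := Nat.ceil_lt_add_one hq
          have heq : (2*lk b - lk b) = lk b := by ring
          have hlkd : lk b / ε ≤ 5 * ε^(-a) := lk_div_le ha0 ha1 hε hwb
          push_cast
          rw [heq] at hceil ⊢
          rw [BB]
          nlinarith [eps_rpow_ge_one ha0 hε hε1]
        have hPn : ((⌈(2*lk b - lk b)/ε⌉₊ + 1 : ℕ) : ℝ)^n ≤ (BB a ε)^n :=
          pow_le_pow_left₀ (by positivity) hPle _
        calc ((B.card:ℝ)) ≤ ((⌈(2*lk b - lk b)/ε⌉₊ + 1 : ℕ) : ℝ)^n := hcount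
          _ ≤ (BB a ε)^n := hPn
          _ ≤ (1/ε + 3) * (BB a ε)^n := by
              have h12 : (0:ℝ) ≤ (1/ε + 2) * (BB a ε)^n :=
                mul_nonneg (by positivity) hBBn0
              linarith
    rcases Nat.eq_or_lt_of_le hbk with hbk0 | hbk1
    · -- tail fiber : at most one point
      have horb : ∀ x ∈ B, ∀ i, (f a)^[i] (x:ℝ) ∈ Icc (0:ℝ) (2 * lk k0) := by
        intro x hx i
        have hc := (hBsub x hx).2
        simp only [hcdef] at hc
        split at hc
        · omega
        · split at hc
          · rename_i h1 h2
            have hx0 : (x:ℝ) = 0 := le_antisymm h2 x.2.1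
            rw [hx0, iter_zero]
            exact ⟨le_refl 0, by nlinarith [lk_pos k0]⟩
          · rename_i h1 h2
            push_neg at h1 h2
            have hidx : k0 ≤ idx (x:ℝ) := by omega
            have hm := mem_idx h2 h1
            have := iter_piece a (Ico_subset_Icc_self hm) i
            constructor
            · linarith [this.1, lk_pos (idx (x:ℝ))]
            · have h2l : 2 * lk (idx (x:ℝ)) ≤ 2 * lk k0 := by
                linarith [lk_anti hidx]
              linarith [this.2]
      have hcard1 : B.card ≤ 1 := by
        apply Finset.card_le_one.mpr
        intro x hx y hy
        by_contra hne
        obtain ⟨i, hi, hgt⟩ := hsepB x hx y hy hne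
        have hx' := horb x hx i
        have hy' := horb y hy i
        have : |(f a)^[i] (x:ℝ) - (f a)^[i] (y:ℝ)| ≤ 2 * lk k0 := by
          rw [abs_sub_le_iff]
          constructor <;> linarith [hx'.1, hx'.2, hy'.1, hy'.2]
        linarith
      calc ((B.card:ℝ)) ≤ 1 := by exact_mod_cast hcard1
        _ ≤ (1/ε + 3) * (BB a ε)^n := by
            have h12 : (0:ℝ) ≤ (1/ε + 2) * (BB a ε)^n :=
              mul_nonneg (by positivity) hBBn0
            linarith
    · -- pad fiber : b = k0 + 1
      have hb1 : b = k0 + 1 := by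
        rw [Finset.mem_range] at hb
        omega
      have hmemB : ∀ x ∈ B, (x:ℝ) ∈ Icc (1/2 : ℝ) 1 := by
        intro x hx
        have hc := (hBsub x hx).2
        simp only [hcdef] at hc
        split at hc
        · rename_i h1
          exact ⟨h1, x.2.2⟩
        · split at hc
          · omega
          · have := min_le_right (idx (x:ℝ)) k0; omega
      have hsepB' : ∀ x ∈ B, ∀ y ∈ B, x ≠ y → ε < |(x:ℝ) - (y:ℝ)| := by
        intro x hx y hy hxy
        obtain ⟨i, hi, hgt⟩ := hsepB x hx y hy hxy
        rwa [iter_id a (hmemB x hx).1 i, iter_id a (hmemB y hy).1 i] at hgt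
      have hcount := count_sep_interval hε (by norm_num : (1/2:ℝ) ≤ 1) hmemB hsepB'
      calc ((B.card:ℝ)) ≤ (1 - 1/2)/ε + 1 := hcount
        _ ≤ (1/ε + 3) * (BB a ε)^n := by
            have h1 : (1 - 1/2 : ℝ)/ε ≤ 1/ε := by
              apply div_le_div_of_nonneg_right _ hε.le
              norm_num
            have h12 : (0:ℝ) ≤ (1/ε + 3) * ((BB a ε)^n - 1) :=
              mul_nonneg (by positivity) (by linarith)
            nlinarith
  -- sum up
  have : (A.card : ℝ) = ∑ b ∈ Finset.range (k0+2), ((A.filter (fun x => c x = b)).card : ℝ) := by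
    rw [hsum]
    push_cast
    rfl
  rw [this]
  calc (∑ b ∈ Finset.range (k0+2), ((A.filter (fun x => c x = b)).card : ℝ))
      ≤ ∑ _b ∈ Finset.range (k0+2), (1/ε + 3) * (BB a ε)^n :=
        Finset.sum_le_sum hfiber
    _ = (k0+2 : ℝ) * ((1/ε + 3) * (BB a ε)^n) := by
        rw [Finset.sum_const, Finset.card_range]
        push_cast
        ring
    _ = QQ ε * (BB a ε)^n := by rw [QQ, hk0def]; push_cast; ring

lemma QQ_pos {ε : ℝ} (hε : 0 < ε) : 0 < QQ ε := by
  rw [QQ]; positivity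

lemma QQ_ge_one {ε : ℝ} (hε : 0 < ε) : 1 ≤ QQ ε := by
  rw [QQ]
  have h1 : (0:ℝ) < 1/ε := by positivity
  have h2 : (2:ℝ) ≤ (k0e ε : ℝ) + 2 := by
    have : (0:ℝ) ≤ (k0e ε : ℝ) := Nat.cast_nonneg _
    linarith
  nlinarith

lemma sepNum_upper {a : ℝ} (ha0 : 0 ≤ a) (ha1 : a < 1) {ε : ℝ} (hε : 0 < ε)
    (hε1 : ε < 1) {n : ℕ} (hn : 1 ≤ n) :
    (sepNum dI (phim a) n ε : ℝ) ≤ QQ ε * (BB a ε)^n := by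
  have hQB : (0:ℝ) ≤ QQ ε * (BB a ε)^n := by
    have := QQ_pos hε
    have := BB_pos (a := a) hε
    positivity
  have hub : ∀ m ∈ SepSet a n ε, m ≤ ⌊QQ ε * (BB a ε)^n⌋₊ := by
    intro m hm
    obtain ⟨A, hA, hcard⟩ := hm
    apply Nat.le_floor
    rw [← hcard]
    exact card_bound_main ha0 ha1 hε hε1 hn hA
  have h1 : sepNum dI (phim a) n ε ≤ ⌊QQ ε * (BB a ε)^n⌋₊ := by
    rw [sepNum_eq]
    exact csSup_le ⟨1, one_mem_sepSet a n ε⟩ hub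
  calc (sepNum dI (phim a) n ε : ℝ) ≤ (⌊QQ ε * (BB a ε)^n⌋₊ : ℝ) := by exact_mod_cast h1
    _ ≤ QQ ε * (BB a ε)^n := Nat.floor_le hQB

lemma sepExp_nonneg_aux {a : ℝ} {ε : ℝ} (hε : 0 < ε) (n : ℕ) :
    0 ≤ Real.log (sepNum dI (phim a) n ε) / n := by
  apply div_nonneg _ (Nat.cast_nonneg n)
  apply Real.log_nonneg
  exact_mod_cast sepNum_ge_one a hε n

lemma sepExp_le {a : ℝ} (ha0 : 0 ≤ a) (ha1 : a < 1) {ε : ℝ} (hε : 0 < ε) (hε1 : ε < 1) :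
    sepExp dI (phim a) ε ≤ Real.log (BB a ε) := by
  set u : ℕ → ℝ := fun n => Real.log (sepNum dI (phim a) n ε) / n with hu
  set v : ℕ → ℝ := fun n => Real.log (QQ ε) / n + Real.log (BB a ε) with hv
  have hQ := QQ_pos hε
  have hB := BB_pos (a := a) hε
  have hvt : Filter.Tendsto v Filter.atTop (nhds (Real.log (BB a ε))) := by
    have := (tendsto_const_div_atTop_nhds_zero_nat (Real.log (QQ ε))).add_const
      (Real.log (BB a ε))
    simpa using this
  have hev : ∀ᶠ n in Filter.atTop, u n ≤ v n := by
    rw [Filter.eventually_atTop]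
    refine ⟨1, fun n hn => ?_⟩
    have h1 := sepNum_upper ha0 ha1 hε hε1 hn
    have h2 : (0:ℝ) < (sepNum dI (phim a) n ε : ℝ) := by
      have := sepNum_ge_one a hε n
      exact_mod_cast lt_of_lt_of_le zero_lt_one (by exact_mod_cast this)
    have h3 : Real.log (sepNum dI (phim a) n ε) ≤ Real.log (QQ ε) + n * Real.log (BB a ε) := by
      calc Real.log (sepNum dI (phim a) n ε) ≤ Real.log (QQ ε * (BB a ε)^n) :=
            Real.log_le_log h2 h1
        _ = Real.log (QQ ε) + Real.log ((BB a ε)^n) := Real.log_mul (ne_of_gt hQ) (by positivity)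
        _ = Real.log (QQ ε) + n * Real.log (BB a ε) := by rw [Real.log_pow]
    have hn0 : (0:ℝ) < (n:ℝ) := by exact_mod_cast hn
    calc u n = Real.log (sepNum dI (phim a) n ε) / n := rfl
      _ ≤ (Real.log (QQ ε) + n * Real.log (BB a ε)) / n :=
          div_le_div_of_nonneg_right h3 hn0.le
      _ = Real.log (QQ ε) / n + Real.log (BB a ε) := by
          rw [add_div, mul_div_cancel_left₀ _ hn0.ne']
      _ = v n := rfl
  have hcb : Filter.IsCoboundedUnder (· ≤ ·) Filter.atTop u := by
    have hbb : Filter.IsBoundedUnder (· ≥ ·) Filter.atTop u :=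
      ⟨0, Filter.eventually_map.mpr (Filter.Eventually.of_forall
        (fun n => sepExp_nonneg_aux hε n))⟩
    exact hbb.isCoboundedUnder_le
  have hbd : Filter.IsBoundedUnder (· ≤ ·) Filter.atTop v := hvt.isBoundedUnder_le
  calc sepExp dI (phim a) ε = Filter.limsup u Filter.atTop := rfl
    _ ≤ Filter.limsup v Filter.atTop := Filter.limsup_le_limsup hev hcb hbd
    _ = Real.log (BB a ε) := hvt.limsup_eq

/-! ### lower bound: itinerary points -/

def Lm (a : ℝ) (k m : ℕ) (s : ℕ) (y : ℝ) : ℝ :=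
  lk k + 2*(m:ℝ)*(s:ℝ)*(wk a k) + (y - lk k)/(NN a k)

def Pt (a : ℝ) (k m : ℕ) : ℕ → (ℕ → ℕ) → ℝ
  | 0, _ => lk k
  | n+1, σ => Lm a k m (σ 0) (Pt a k m n (fun i => σ (i+1)))

section lower
variable {a : ℝ} {k m M : ℕ}

lemma Pt_mem (hm : 1 ≤ m) (hMN : 2*m*(M-1) + 3 ≤ NN a k) :
    ∀ (n : ℕ) (σ : ℕ → ℕ), (∀ i < n, σ i < M) →
    Pt a k m n σ ∈ Icc (lk k) (lk k + ((NN a k:ℝ) - 2) * wk a k) := by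
  intro n
  induction n with
  | zero =>
    intro σ _
    have hN3 : 3 ≤ NN a k := by omega
    have hN3' : (3:ℝ) ≤ (NN a k : ℝ) := by exact_mod_cast hN3
    have hw := wk_pos a k
    simp only [Pt]
    exact ⟨le_refl _, by nlinarith⟩
  | succ n ih =>
    intro σ hσ
    have hσ0 : σ 0 < M := hσ 0 (by omega)
    have hy := ih (fun i => σ (i+1)) (fun i hi => hσ (i+1) (by omega))
    set y := Pt a k m n (fun i => σ (i+1)) with hydef
    have hN3 : 3 ≤ NN a k := by omega
    have hNpos : (0:ℝ) < (NN a k : ℝ) := NN_cast_pos a k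
    have hw := wk_pos a k
    have hs : (2*m*(σ 0) : ℕ) + 3 ≤ NN a k := by
      have h1 : 2*m*(σ 0) ≤ 2*m*(M-1) := by
        apply Nat.mul_le_mul_left
        omega
      omega
    have hsR : 2*(m:ℝ)*((σ 0 : ℕ):ℝ) ≤ (NN a k:ℝ) - 3 := by
      have h' : ((2*m*(σ 0) + 3 : ℕ):ℝ) ≤ ((NN a k : ℕ):ℝ) := by exact_mod_cast hs
      push_cast at h'
      linarith
    have hsnn : (0:ℝ) ≤ 2*(m:ℝ)*((σ 0 : ℕ):ℝ) := by positivity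
    have hlkNw : lk k = (NN a k:ℝ) * wk a k := lk_eq_N_mul_w a k
    have hyl : lk k ≤ y := hy.1
    have hyu : y ≤ lk k + ((NN a k:ℝ) - 2) * wk a k := hy.2
    have hdivnn : 0 ≤ (y - lk k)/(NN a k:ℝ) := div_nonneg (by linarith) hNpos.le
    have hdivle : (y - lk k)/(NN a k:ℝ) ≤ wk a k := by
      rw [div_le_iff₀ hNpos]
      nlinarith
    show Lm a k m (σ 0) y ∈ _
    rw [Lm]
    constructor
    · nlinarith
    · nlinarith

lemma Pt_Ico (hm : 1 ≤ m) (hMN : 2*m*(M-1) + 3 ≤ NN a k)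
    (n : ℕ) (σ : ℕ → ℕ) (hσ : ∀ i < n, σ i < M) :
    Pt a k m n σ ∈ Ico (lk k) (2 * lk k) := by
  have h := Pt_mem hm hMN n σ hσ
  have hw := wk_pos a k
  have hlkNw : lk k = (NN a k:ℝ) * wk a k := lk_eq_N_mul_w a k
  exact ⟨h.1, by nlinarith [h.2]⟩

lemma Pt_cons (hm : 1 ≤ m) (hMN : 2*m*(M-1) + 3 ≤ NN a k)
    (n : ℕ) (σ : ℕ → ℕ) (hσ : ∀ i < n+1, σ i < M) :
    Pt a k m (n+1) σ ∈ Icc (lk k + 2*(m:ℝ)*((σ 0 : ℕ):ℝ)*(wk a k))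
      (lk k + 2*(m:ℝ)*((σ 0 : ℕ):ℝ)*(wk a k) + wk a k) := by
  have hy := Pt_mem hm hMN n (fun i => σ (i+1)) (fun i hi => hσ (i+1) (by omega))
  set y := Pt a k m n (fun i => σ (i+1)) with hydef
  have hNpos : (0:ℝ) < (NN a k : ℝ) := NN_cast_pos a k
  have hw := wk_pos a k
  have hlkNw : lk k = (NN a k:ℝ) * wk a k := lk_eq_N_mul_w a k
  have hdivnn : 0 ≤ (y - lk k)/(NN a k:ℝ) := div_nonneg (by linarith [hy.1]) hNpos.le
  have hdivle : (y - lk k)/(NN a k:ℝ) ≤ wk a k := by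
    rw [div_le_iff₀ hNpos]
    nlinarith [hy.2]
  show Lm a k m (σ 0) y ∈ _
  rw [Lm]
  constructor
  · linarith
  · linarith

lemma f_Pt (hm : 1 ≤ m) (hMN : 2*m*(M-1) + 3 ≤ NN a k)
    (n : ℕ) (σ : ℕ → ℕ) (hσ : ∀ i < n+1, σ i < M) :
    f a (Pt a k m (n+1) σ) = Pt a k m n (fun i => σ (i+1)) := by
  have hIco := Pt_Ico hm hMN (n+1) σ hσ
  have hy := Pt_mem hm hMN n (fun i => σ (i+1)) (fun i hi => hσ (i+1) (by omega))
  set y := Pt a k m n (fun i => σ (i+1)) with hydef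
  have hNpos : (0:ℝ) < (NN a k : ℝ) := NN_cast_pos a k
  have hlk := lk_pos k
  have hw := wk_pos a k
  have hlkNw : lk k = (NN a k:ℝ) * wk a k := lk_eq_N_mul_w a k
  rw [f_eq_pc a (Ico_subset_Icc_self hIco)]
  have hPt : Pt a k m (n+1) σ = Lm a k m (σ 0) y := rfl
  rw [hPt, pc]
  have harg : (NN a k:ℝ) * (Lm a k m (σ 0) y - lk k) / lk k
      = 2*((m*(σ 0) : ℕ):ℝ) + (y - lk k)/lk k := by
    have hwdef : wk a k = lk k / (NN a k : ℝ) := rfl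
    rw [Lm, hwdef]
    push_cast
    field_simp
    ring
  have ht0 : 0 ≤ (y - lk k)/lk k := div_nonneg (by linarith [hy.1]) hlk.le
  have ht1 : (y - lk k)/lk k ≤ 1 := by
    rw [div_le_one hlk]
    nlinarith [hy.2]
  rw [harg, show (2*((m*(σ 0) : ℕ):ℝ) : ℝ) = 2*(((m*(σ 0) : ℕ) : ℤ):ℝ) by push_cast; ring,
    tri_eval ((m*(σ 0) : ℕ) : ℤ) ht0 ht1]
  field_simp
  ring

lemma Pt_sep (hm : 1 ≤ m) (hMN : 2*m*(M-1) + 3 ≤ NN a k) :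
    ∀ (i n : ℕ) (σ τ : ℕ → ℕ), i < n → (∀ j < n, σ j < M) → (∀ j < n, τ j < M) →
    σ i ≠ τ i →
    (2*(m:ℝ) - 1) * wk a k ≤ |(f a)^[i] (Pt a k m n σ) - (f a)^[i] (Pt a k m n τ)| := by
  intro i
  induction i with
  | zero =>
    intro n σ τ hin hσ hτ hne
    obtain ⟨n', rfl⟩ : ∃ n', n = n'+1 := ⟨n-1, by omega⟩
    simp only [Function.iterate_zero, id_eq]
    have hx := Pt_cons hm hMN n' σ hσ
    have hy := Pt_cons hm hMN n' τ hτ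
    have hw := wk_pos a k
    have hm1 : (1:ℝ) ≤ (m:ℝ) := by exact_mod_cast hm
    rcases lt_or_gt_of_ne hne with hlt | hgt
    · have hc : ((σ 0 : ℕ):ℝ) + 1 ≤ ((τ 0 : ℕ):ℝ) := by exact_mod_cast hlt
      have key := mul_le_mul_of_nonneg_right hc
        (by positivity : (0:ℝ) ≤ 2*(m:ℝ)*wk a k)
      rw [abs_sub_comm, abs_of_nonneg (by nlinarith [hx.2, hy.1])]
      nlinarith [hx.2, hy.1]
    · have hc : ((τ 0 : ℕ):ℝ) + 1 ≤ ((σ 0 : ℕ):ℝ) := by exact_mod_cast hgt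
      have key := mul_le_mul_of_nonneg_right hc
        (by positivity : (0:ℝ) ≤ 2*(m:ℝ)*wk a k)
      rw [abs_of_nonneg (by nlinarith [hy.2, hx.1])]
      nlinarith [hy.2, hx.1]
  | succ i ih =>
    intro n σ τ hin hσ hτ hne
    obtain ⟨n', rfl⟩ : ∃ n', n = n'+1 := ⟨n-1, by omega⟩
    rw [Function.iterate_succ_apply, Function.iterate_succ_apply,
      f_Pt hm hMN n' σ hσ, f_Pt hm hMN n' τ hτ]
    exact ih n' _ _ (by omega) (fun j hj => hσ (j+1) (by omega))
      (fun j hj => hτ (j+1) (by omega)) hne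

lemma sepNum_lower (hm : 1 ≤ m) (hMN : 2*m*(M-1) + 3 ≤ NN a k)
    {ε : ℝ} (hε : 0 < ε) (hgap : ε < (2*(m:ℝ) - 1) * wk a k) (n : ℕ) :
    M^n ≤ sepNum dI (phim a) n ε := by
  classical
  set ext : (Fin n → Fin M) → (ℕ → ℕ) := fun σ i => if h : i < n then (σ ⟨i, h⟩ : ℕ) else 0
    with hext
  have hbnd : ∀ σ : Fin n → Fin M, ∀ i < n, ext σ i < M := by
    intro σ i hi
    simp only [hext, dif_pos hi]
    exact (σ ⟨i, hi⟩).2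
  have hmem01 : ∀ σ : Fin n → Fin M, Pt a k m n (ext σ) ∈ unitInterval := by
    intro σ
    have h := Pt_Ico hm hMN n (ext σ) (hbnd σ)
    have hl := lk_pos k
    have hlq := lk_le k
    constructor
    · linarith [h.1]
    · linarith [h.2]
  set pt : (Fin n → Fin M) → unitInterval := fun σ => ⟨Pt a k m n (ext σ), hmem01 σ⟩
    with hpt
  have hw := wk_pos a k
  have hm1 : (1:ℝ) ≤ (m:ℝ) := by exact_mod_cast hm
  have hgap0 : 0 < (2*(m:ℝ) - 1) * wk a k := lt_trans hε hgap
  have hsep2 : ∀ σ τ : Fin n → Fin M, σ ≠ τ → ∃ i < n,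
      ε < |(f a)^[i] (Pt a k m n (ext σ)) - (f a)^[i] (Pt a k m n (ext τ))| := by
    intro σ τ hne
    obtain ⟨i, hi⟩ := Function.ne_iff.mp hne
    refine ⟨i.val, i.isLt, ?_⟩
    have hvne : ext σ i.val ≠ ext τ i.val := by
      simp only [hext, dif_pos i.isLt]
      intro h
      exact hi (Fin.val_injective (by simpa using h))
    calc ε < (2*(m:ℝ) - 1) * wk a k := hgap
      _ ≤ _ := Pt_sep hm hMN i.val n _ _ i.isLt (hbnd σ) (hbnd τ) hvne
  have hinj : Function.Injective pt := by
    intro σ τ hpq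
    by_contra hne
    obtain ⟨i, hi, hgt⟩ := hsep2 σ τ hne
    have : Pt a k m n (ext σ) = Pt a k m n (ext τ) := by
      have := congrArg (fun z : unitInterval => (z:ℝ)) hpq
      simpa [hpt] using this
    rw [this, sub_self, abs_zero] at hgt
    linarith
  set A : Finset unitInterval := Finset.image pt Finset.univ with hA
  have hcard : A.card = M^n := by
    rw [hA, Finset.card_image_of_injective _ hinj, Finset.card_univ,
      Fintype.card_fun, Fintype.card_fin, Fintype.card_fin]
  have hsepA : ∀ x ∈ A, ∀ y ∈ A, x ≠ y →
      ∃ i < n, ε < dI ((phim a)^[i] x) ((phim a)^[i] y) := by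
    intro x hx y hy hxy
    rw [hA, Finset.mem_image] at hx hy
    obtain ⟨σ, _, rfl⟩ := hx
    obtain ⟨τ, _, rfl⟩ := hy
    have hστ : σ ≠ τ := fun h => hxy (by rw [h])
    obtain ⟨i, hi, hgt⟩ := hsep2 σ τ hστ
    exact ⟨i, hi, by rwa [dI_iter]⟩
  rw [sepNum_eq]
  exact le_csSup (sepSet_bdd a hε n) ⟨A, hsepA, hcard⟩

end lower

/-! ### sepExp lower bound -/

def mm (a : ℝ) : ℕ := ⌈5*(2:ℝ)^(a/(1-a))⌉₊ + 1

def CC (a : ℝ) : ℝ := Real.log (16*(mm a)) + Real.log 24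

set_option maxHeartbeats 1000000 in
lemma sepExp_ge {a : ℝ} (ha0 : 0 ≤ a) (ha1 : a < 1) {ε : ℝ} (hε : 0 < ε) (hε1 : ε < 1)
    (hεw : ε < wk a 0) :
    a * |Real.log ε| - CC a ≤ sepExp dI (phim a) ε := by
  have hex : ∃ k, wk a k ≤ ε := wk_small ε hε
  set k := Nat.find hex with hkdef
  have hk : wk a k ≤ ε := Nat.find_spec hex
  have hk0 : k ≠ 0 := by
    intro h
    rw [h] at hk
    linarith
  obtain ⟨k', hk'⟩ : ∃ k', k = k'+1 := ⟨k-1, by omega⟩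
  have hkprev : ε < wk a k' := by
    have := Nat.find_min hex (m := k') (by omega)
    push_neg at this
    linarith
  set B := (2:ℝ)^(a/(1-a)) with hB
  have hBpos : 0 < B := Real.rpow_pos_of_pos two_pos _
  have hBinv : B * (2:ℝ)^(-(a/(1-a))) = 1 := by
    rw [hB, ← Real.rpow_add two_pos]
    norm_num
  set m := mm a with hmdef
  have hm : 1 ≤ m := by rw [hmdef, mm]; omega
  have hm5 : 5*B + 1 ≤ (m:ℝ) := by
    rw [hmdef, mm]
    push_cast
    linarith [Nat.le_ceil (5*B)]
  have hw := wk_pos a k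
  have hrat := wk_ratio ha0 ha1 k'
  rw [← hk'] at hrat
  have h1 : (2:ℝ)^(-(a/(1-a)))/5 * ε < wk a k := by
    calc (2:ℝ)^(-(a/(1-a)))/5 * ε < (2:ℝ)^(-(a/(1-a)))/5 * wk a k' := by
          apply mul_lt_mul_of_pos_left hkprev
          positivity
      _ ≤ wk a k := hrat
  have hgap : ε < (2*(m:ℝ) - 1) * wk a k := by
    have h2 : 10*B ≤ 2*(m:ℝ) - 1 := by linarith
    have e1 : 10*B*((2:ℝ)^(-(a/(1-a)))/5*ε) = 2*ε := by
      have : 10*B*((2:ℝ)^(-(a/(1-a)))/5*ε) = 2*(B*(2:ℝ)^(-(a/(1-a))))*ε := by ring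
      rw [this, hBinv]
      ring
    have h3 : 2*ε < 10*B*wk a k := by
      rw [← e1]
      apply mul_lt_mul_of_pos_left h1
      positivity
    have h4 : 10*B*wk a k ≤ (2*(m:ℝ)-1) * wk a k :=
      mul_le_mul_of_nonneg_right h2 hw.le
    linarith
  set M := (NN a k - 3)/(2*m) + 1 with hMdef
  have hN3 : 3 ≤ NN a k := NN_ge3 ha0 ha1 k
  have hMN : 2*m*(M-1) + 3 ≤ NN a k := by
    have h5 : 2*m*((NN a k - 3)/(2*m)) ≤ NN a k - 3 := by
      rw [mul_comm]
      exact Nat.div_mul_le_self _ _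
    rw [hMdef]
    simp only [Nat.add_sub_cancel]
    calc 2*m*((NN a k - 3)/(2*m)) + 3 ≤ (NN a k - 3) + 3 := Nat.add_le_add_right h5 3
      _ = NN a k := Nat.sub_add_cancel hN3
  have hsn : ∀ n, M^n ≤ sepNum dI (phim a) n ε :=
    fun n => sepNum_lower hm hMN hε hgap n
  have hM1 : 1 ≤ M := by
    rw [hMdef]
    exact Nat.succ_le_succ (Nat.zero_le _)
  -- sepExp ≥ log M
  set u : ℕ → ℝ := fun n => Real.log (sepNum dI (phim a) n ε) / n with hu
  have hlogM : ∀ n : ℕ, 1 ≤ n → Real.log (M:ℝ) ≤ u n := by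
    intro n hn
    have hn0 : (0:ℝ) < (n:ℝ) := by exact_mod_cast hn
    have hMn : (0:ℝ) < ((M^n : ℕ):ℝ) := by
      have : 0 < M^n := Nat.pow_pos (by omega)
      exact_mod_cast this
    have hle : ((M^n : ℕ):ℝ) ≤ ((sepNum dI (phim a) n ε : ℕ):ℝ) := by
      exact_mod_cast hsn n
    have h2 : Real.log ((M^n : ℕ):ℝ) ≤ Real.log (sepNum dI (phim a) n ε) :=
      Real.log_le_log hMn hle
    rw [show ((M^n : ℕ):ℝ) = ((M:ℕ):ℝ)^n by push_cast; ring, Real.log_pow] at h2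
    rw [hu]
    simp only
    rw [le_div_iff₀ hn0]
    calc Real.log (M:ℝ) * n = (n:ℝ) * Real.log (M:ℝ) := by ring
      _ ≤ _ := h2
  have hbdd : Filter.IsBoundedUnder (· ≤ ·) Filter.atTop u := by
    refine ⟨Real.log (QQ ε) + Real.log (BB a ε), ?_⟩
    apply Filter.eventually_map.mpr
    apply Filter.Eventually.of_forall
    intro n
    rcases Nat.eq_zero_or_pos n with rfl | hn
    · have hu0 : u 0 = 0 := by
        rw [hu]; simp
      rw [hu0]
      have h7 : (7:ℝ) ≤ BB a ε := BB_ge_seven ha0 hε hε1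
      have hlog7 : (0:ℝ) ≤ Real.log (BB a ε) :=
        Real.log_nonneg (by linarith)
      have hlogQ : (0:ℝ) ≤ Real.log (QQ ε) := Real.log_nonneg (QQ_ge_one hε)
      linarith
    · have h1 := sepNum_upper ha0 ha1 hε hε1 hn
      have h2 : (0:ℝ) < (sepNum dI (phim a) n ε : ℝ) := by
        have := sepNum_ge_one a hε n
        have : (1:ℝ) ≤ (sepNum dI (phim a) n ε : ℝ) := by exact_mod_cast this
        linarith
      have hQ := QQ_pos hε
      have hB := BB_pos (a := a) hε
      have h3 : Real.log (sepNum dI (phim a) n ε)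
          ≤ Real.log (QQ ε) + n * Real.log (BB a ε) := by
        calc Real.log (sepNum dI (phim a) n ε) ≤ Real.log (QQ ε * (BB a ε)^n) :=
              Real.log_le_log h2 h1
          _ = Real.log (QQ ε) + Real.log ((BB a ε)^n) :=
              Real.log_mul (ne_of_gt hQ) (by positivity)
          _ = Real.log (QQ ε) + n * Real.log (BB a ε) := by rw [Real.log_pow]
      have hn0 : (0:ℝ) < (n:ℝ) := by exact_mod_cast hn
      have hn1 : (1:ℝ) ≤ (n:ℝ) := by exact_mod_cast hn
      have hlogQ : (0:ℝ) ≤ Real.log (QQ ε) := Real.log_nonneg (QQ_ge_one hε)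
      have hQn : Real.log (QQ ε) / n ≤ Real.log (QQ ε) := by
        rw [div_le_iff₀ hn0]
        nlinarith
      have : u n ≤ Real.log (QQ ε) / n + Real.log (BB a ε) := by
        rw [hu]
        simp only
        rw [div_le_iff₀ hn0]
        calc Real.log (sepNum dI (phim a) n ε)
            ≤ Real.log (QQ ε) + n * Real.log (BB a ε) := h3
          _ = (Real.log (QQ ε) / n + Real.log (BB a ε)) * n := by
              field_simp
      linarith
  have hfreq : ∃ᶠ n in Filter.atTop, Real.log (M:ℝ) ≤ u n :=
    (Filter.eventually_atTop.mpr ⟨1, hlogM⟩).frequently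
  have hsep_ge : Real.log (M:ℝ) ≤ sepExp dI (phim a) ε :=
    Filter.le_limsup_of_frequently_le hfreq hbdd
  -- now bound log M from below
  have hloge : Real.log ε < 0 := Real.log_neg hε hε1
  have habs : |Real.log ε| = -Real.log ε := abs_of_neg hloge
  have hrplog : Real.log (ε^(-a)) = a * |Real.log ε| := by
    rw [Real.log_rpow hε, habs]
    ring
  have hm16 : (1:ℝ) ≤ 16*(m:ℝ) := by
    have : (1:ℝ) ≤ (m:ℝ) := by exact_mod_cast hm
    linarith
  have hlog16m : 0 ≤ Real.log (16*(m:ℝ)) := Real.log_nonneg hm16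
  have hlog24 : 0 ≤ Real.log 24 := Real.log_nonneg (by norm_num)
  have hMlog0 : 0 ≤ Real.log (M:ℝ) := by
    apply Real.log_nonneg
    exact_mod_cast hM1
  rcases le_or_gt 24 (ε^(-a)) with h24 | h24
  · -- main case
    have hwa : (0:ℝ) < wk a k ^ a := Real.rpow_pos_of_pos hw a
    have hNW := NW_lb ha0 ha1 k
    have hwea : ε^(-a) ≤ wk a k^(-a) :=
      Real.rpow_le_rpow_of_nonpos hw hk (by linarith)
    have hwinv : wk a k^(-a) = (wk a k^a)⁻¹ := Real.rpow_neg hw.le a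
    have hN4 : ε^(-a)/4 ≤ (NN a k : ℝ) := by
      have h5 : (wk a k^a)⁻¹ / 4 ≤ (NN a k : ℝ) := by
        have h5a := mul_le_mul_of_nonneg_left hNW (le_of_lt (inv_pos.mpr hwa))
        have h6 : (wk a k^a)⁻¹ * ((NN a k:ℝ) * wk a k^a) = (NN a k:ℝ) := by
          field_simp
        nlinarith [h5a, h6]
      rw [hwinv] at hwea
      linarith [div_le_div_of_nonneg_right hwea (by norm_num : (0:ℝ) ≤ 4)]
    have hN6 : (6:ℝ) ≤ (NN a k:ℝ) := by linarith
    have hdivlt : (NN a k : ℕ) - 3 < 2*m*M := by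
      have h0 : 0 < 2*m := by omega
      have hdm := Nat.div_add_mod (NN a k - 3) (2*m)
      have hmod := Nat.mod_lt (NN a k - 3) h0
      have hlt : NN a k - 3 < 2*m*((NN a k - 3)/(2*m)) + 2*m := by
        calc NN a k - 3 = 2*m*((NN a k - 3)/(2*m)) + (NN a k - 3) % (2*m) := hdm.symm
          _ < 2*m*((NN a k - 3)/(2*m)) + 2*m := Nat.add_lt_add_left hmod _
      rw [hMdef, Nat.mul_add, Nat.mul_one]
      exact hlt
    have hcast : ((NN a k - 3 : ℕ):ℝ) = (NN a k:ℝ) - 3 := by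
      have : (3:ℕ) ≤ NN a k := hN3
      push_cast [Nat.cast_sub this]
      ring
    have hMlb : ((NN a k:ℝ) - 3)/(2*(m:ℝ)) ≤ (M:ℝ) := by
      have h6 : (NN a k:ℝ) - 3 < 2*(m:ℝ)*(M:ℝ) := by
        rw [← hcast]
        exact_mod_cast hdivlt
      rw [div_le_iff₀ (by positivity : (0:ℝ) < 2*(m:ℝ))]
      nlinarith
    have hMlb2 : ε^(-a)/(16*(m:ℝ)) ≤ (M:ℝ) := by
      have h7 : (NN a k:ℝ)/2 ≤ (NN a k:ℝ) - 3 := by linarith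
      have h8 : ε^(-a)/(16*(m:ℝ)) ≤ ((NN a k:ℝ) - 3)/(2*(m:ℝ)) := by
        rw [div_le_div_iff₀ (by positivity) (by positivity)]
        nlinarith
      linarith
    have hMpos : (0:ℝ) < ε^(-a)/(16*(m:ℝ)) := by positivity
    have h9 : Real.log (ε^(-a)/(16*(m:ℝ))) ≤ Real.log (M:ℝ) :=
      Real.log_le_log hMpos hMlb2
    rw [Real.log_div (by positivity) (by positivity), hrplog] at h9
    rw [CC, ← hmdef]
    linarith
  · -- small case
    have h10 : Real.log (ε^(-a)) < Real.log 24 := by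
      apply Real.log_lt_log (Real.rpow_pos_of_pos hε _) h24
    rw [hrplog] at h10
    rw [CC, ← hmdef]
    linarith

/-! ### main limit -/

lemma log_BB_eq {a ε : ℝ} (hε : 0 < ε) (hε1 : ε < 1) :
    Real.log (BB a ε) = Real.log 7 + a * |Real.log ε| := by
  have hrp : (0:ℝ) < ε^(-a) := Real.rpow_pos_of_pos hε _
  have habs : |Real.log ε| = -Real.log ε := abs_of_neg (Real.log_neg hε hε1)
  rw [BB, Real.log_mul (by norm_num) (ne_of_gt hrp), Real.log_rpow hε, habs]
  ring

lemma main_tendsto {a : ℝ} (ha0 : 0 ≤ a) (ha1 : a < 1) :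
    Filter.Tendsto (fun ε : ℝ => sepExp dI (phim a) ε / |Real.log ε|)
      (nhdsWithin 0 (Set.Ioi 0)) (nhds a) := by
  have hw0 := wk_pos a 0
  set δ := min (wk a 0) (1/2) with hδ
  have hδpos : 0 < δ := lt_min hw0 (by norm_num)
  have hev : ∀ᶠ ε in nhdsWithin (0:ℝ) (Set.Ioi 0), ε ∈ Set.Ioo (0:ℝ) δ :=
    Ioo_mem_nhdsGT_of_mem ⟨le_refl 0, hδpos⟩
  have hlog : Filter.Tendsto (fun ε : ℝ => |Real.log ε|)
      (nhdsWithin 0 (Set.Ioi 0)) Filter.atTop :=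
    tendsto_abs_atBot_atTop.comp Real.tendsto_log_nhdsGT_zero
  have hup0 : Filter.Tendsto (fun ε : ℝ => Real.log 7 / |Real.log ε|)
      (nhdsWithin 0 (Set.Ioi 0)) (nhds 0) := Filter.Tendsto.div_atTop tendsto_const_nhds hlog
  have hlo0 : Filter.Tendsto (fun ε : ℝ => CC a / |Real.log ε|)
      (nhdsWithin 0 (Set.Ioi 0)) (nhds 0) := Filter.Tendsto.div_atTop tendsto_const_nhds hlog
  have hup : Filter.Tendsto (fun ε : ℝ => a + Real.log 7 / |Real.log ε|)
      (nhdsWithin 0 (Set.Ioi 0)) (nhds a) := by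
    have h := (tendsto_const_nhds :
      Filter.Tendsto (fun _ : ℝ => a) (nhdsWithin (0:ℝ) (Set.Ioi 0)) (nhds a)).add hup0
    simpa using h
  have hlo : Filter.Tendsto (fun ε : ℝ => a - CC a / |Real.log ε|)
      (nhdsWithin 0 (Set.Ioi 0)) (nhds a) := by
    have h := (tendsto_const_nhds :
      Filter.Tendsto (fun _ : ℝ => a) (nhdsWithin (0:ℝ) (Set.Ioi 0)) (nhds a)).sub hlo0
    simpa using h
  apply tendsto_of_tendsto_of_tendsto_of_le_of_le' hlo hup
  · filter_upwards [hev] with ε hmem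
    obtain ⟨hε0, hεδ⟩ := hmem
    have hε1 : ε < 1 := by
      have := min_le_right (wk a 0) (1/2:ℝ)
      rw [hδ] at hεδ
      linarith
    have hεw : ε < wk a 0 := by
      have := min_le_left (wk a 0) (1/2:ℝ)
      rw [hδ] at hεδ
      linarith
    have hlabs : 0 < |Real.log ε| := abs_pos.mpr (ne_of_lt (Real.log_neg hε0 hε1))
    have hge := sepExp_ge ha0 ha1 hε0 hε1 hεw
    have h2 : (a * |Real.log ε| - CC a)/|Real.log ε| ≤ sepExp dI (phim a) ε/|Real.log ε| :=
      div_le_div_of_nonneg_right hge hlabs.le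
    have h3 : (a * |Real.log ε| - CC a)/|Real.log ε|
        = a - CC a / |Real.log ε| := by
      rw [sub_div, mul_div_cancel_right₀ _ hlabs.ne']
    linarith
  · filter_upwards [hev] with ε hmem
    obtain ⟨hε0, hεδ⟩ := hmem
    have hε1 : ε < 1 := by
      have := min_le_right (wk a 0) (1/2:ℝ)
      rw [hδ] at hεδ
      linarith
    have hlabs : 0 < |Real.log ε| := abs_pos.mpr (ne_of_lt (Real.log_neg hε0 hε1))
    have hle := sepExp_le ha0 ha1 hε0 hε1
    rw [log_BB_eq hε0 hε1] at hle
    have h2 : sepExp dI (phim a) ε/|Real.log ε|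
        ≤ (Real.log 7 + a * |Real.log ε|)/|Real.log ε| :=
      div_le_div_of_nonneg_right hle hlabs.le
    have h3 : (Real.log 7 + a * |Real.log ε|)/|Real.log ε|
        = a + Real.log 7 / |Real.log ε| := by
      rw [add_div, mul_div_cancel_right₀ _ hlabs.ne']
      ring
    linarith

end MMDaux

/-- For every `a ∈ [0,1)`, with `α = 1 - a`, there exists an `α`-Hölder continuous map
`φ : [0,1] → [0,1]` whose lower and upper metric mean dimensions both equal `a`. -/
theorem exists_holder_map_with_mdim_eq (a : ℝ) (ha : a ∈ Set.Ico (0 : ℝ) 1) :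
    ∃ φ : unitInterval → unitInterval, Continuous φ ∧
      (∃ K : ℝ, 0 < K ∧ ∀ x y : unitInterval,
        |(φ x : ℝ) - (φ y : ℝ)| ≤ K * |(x : ℝ) - (y : ℝ)| ^ (1 - a)) ∧
      mdimLower dI φ = a ∧ mdimUpper dI φ = a := by
  obtain ⟨ha0, ha1⟩ := ha
  have hc : 0 < 1 - a := by linarith
  refine ⟨MMDaux.phim a, ?_, ⟨13, by norm_num, ?_⟩, ?_, ?_⟩
  · rw [Metric.continuous_iff]
    intro x ε hε
    set η := min 1 ((ε/14)^((1-a)⁻¹)) with hη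
    have hη1 : (0:ℝ) < (ε/14)^((1-a)⁻¹) := Real.rpow_pos_of_pos (by linarith) _
    refine ⟨η, lt_min one_pos hη1, ?_⟩
    intro y hy
    have hdist : dist y x = |(y:ℝ) - (x:ℝ)| := by rw [Subtype.dist_eq, Real.dist_eq]
    have hdist2 : dist (MMDaux.phim a y) (MMDaux.phim a x)
        = |MMDaux.f a (y:ℝ) - MMDaux.f a (x:ℝ)| := by
      rw [Subtype.dist_eq, Real.dist_eq]
      rfl
    rw [hdist2]
    have h1 := MMDaux.f_holder ha0 ha1 y.2 x.2
    have h2 : |(y:ℝ) - (x:ℝ)| ^ (1-a) ≤ ((ε/14)^((1-a)⁻¹)) ^ (1-a) := by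
      apply Real.rpow_le_rpow (abs_nonneg _) _ (by linarith)
      rw [hdist] at hy
      calc |(y:ℝ) - (x:ℝ)| ≤ η := hy.le
        _ ≤ (ε/14)^((1-a)⁻¹) := min_le_right _ _
    have h3 : ((ε/14)^((1-a)⁻¹)) ^ (1-a) = ε/14 := by
      rw [← Real.rpow_mul (by positivity : (0:ℝ) ≤ ε/14), inv_mul_cancel₀ hc.ne',
        Real.rpow_one]
    rw [h3] at h2
    calc |MMDaux.f a (y:ℝ) - MMDaux.f a (x:ℝ)| ≤ 13 * |(y:ℝ) - (x:ℝ)| ^ (1-a) := h1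
      _ ≤ 13 * (ε/14) := by linarith
      _ < ε := by linarith
  · intro x y
    exact MMDaux.f_holder ha0 ha1 x.2 y.2
  · exact Filter.Tendsto.liminf_eq (MMDaux.main_tendsto ha0 ha1)
  · exact Filter.Tendsto.limsup_eq (MMDaux.main_tendsto ha0 ha1)
end
end

section
/- Let φ : [0,1] → [0,1] be continuous and suppose there are points 0 = a_0 < a_1 < a_2 < ⋯ with sup_k a_k = 1 and integers 2 ≤ s_1 ≤ s_2 ≤ ⋯ such that, for every k ≥ 1, the interval I_k = [a_{k−1}, a_k] is partitioned into s_k subintervals I_k^1, …, I_k^{s_k} of equal length and φ restricted to each I_k^i is an affine bijection of I_k^i onto I_k. Then the lower metric mean dimension of ([0,1], |·|, φ) is at least liminf_{k→∞} (log s_{k−1}/log s_k) / (1 − log|I_k|/log s_k), where |I_k| = a_k − a_{k−1}. -/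
open Filter Set Topology

noncomputable section

/-- `φ` restricted to the `i`-th (0-indexed) of `s` equal-length closed subintervals of
`[u,v]` is an affine bijection onto `[u,v]`: on that subinterval `φ` is given by an affine
map `t ↦ c t + e` whose image of the subinterval is exactly `[u,v]`. -/
def AffineLeg (φ : unitInterval → unitInterval) (u v : ℝ) (s : ℕ) (i : ℕ) : Prop :=
  ∃ c e : ℝ,
    (∀ x : unitInterval,
      (x : ℝ) ∈ Set.Icc (u + (i : ℝ) * ((v - u) / (s : ℝ)))
        (u + ((i : ℝ) + 1) * ((v - u) / (s : ℝ))) → (φ x : ℝ) = c * (x : ℝ) + e) ∧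
    (fun t : ℝ => c * t + e) '' Set.Icc (u + (i : ℝ) * ((v - u) / (s : ℝ)))
        (u + ((i : ℝ) + 1) * ((v - u) / (s : ℝ))) = Set.Icc u v

namespace HorseshoeProof

/-- Point determined by a finite itinerary, via inverse branches `Θ i`. -/
def ptA (Θ : ℕ → ℝ → ℝ) (b : ℝ) : List ℕ → ℝ
  | [] => b
  | i :: w => Θ i (ptA Θ b w)


/-- The set of cardinalities of `(n,φ,ε)`-separated sets. -/
def sepSets (φ : unitInterval → unitInterval) (n : ℕ) (ε : ℝ) : Set ℕ :=
  {m : ℕ | ∃ A : Finset unitInterval,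
    (∀ x ∈ A, ∀ y ∈ A, x ≠ y → ∃ i < n, ε < dI (φ^[i] x) (φ^[i] y)) ∧ A.card = m}

lemma sepNum_def (φ : unitInterval → unitInterval) (n : ℕ) (ε : ℝ) :
    sepNum dI φ n ε = sSup (sepSets φ n ε) := rfl

lemma abs_sub_lt_of_floor_eq {ε u v : ℝ} (hε : 0 < ε) (hu : 0 ≤ u) (hv : 0 ≤ v)
    (h : ⌊u/ε⌋₊ = ⌊v/ε⌋₊) : |u - v| < ε := by
  have h1 : u/ε < (⌊u/ε⌋₊ : ℝ) + 1 := Nat.lt_floor_add_one _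
  have h2 : (⌊v/ε⌋₊ : ℝ) ≤ v/ε := Nat.floor_le (by positivity)
  have h3 : v/ε < (⌊v/ε⌋₊ : ℝ) + 1 := Nat.lt_floor_add_one _
  have h4 : (⌊u/ε⌋₊ : ℝ) ≤ u/ε := Nat.floor_le (by positivity)
  rw [h] at h1 h4
  rw [abs_sub_lt_iff]
  constructor
  · have : (u - v)/ε < 1 := by rw [sub_div]; linarith
    calc u - v = (u-v)/ε * ε := by field_simp
    _ < 1 * ε := mul_lt_mul_of_pos_right this hε
    _ = ε := one_mul ε
  · have : (v - u)/ε < 1 := by rw [sub_div]; linarith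
    calc v - u = (v-u)/ε * ε := by field_simp
    _ < 1 * ε := mul_lt_mul_of_pos_right this hε
    _ = ε := one_mul ε

lemma mem_sepSets_le {φ : unitInterval → unitInterval} {n : ℕ} {ε : ℝ} (hε : 0 < ε)
    {m : ℕ} (hm : m ∈ sepSets φ n ε) : m ≤ (⌊1/ε⌋₊ + 1)^n := by
  obtain ⟨A, hA, rfl⟩ := hm
  have key : A.card ≤ (Fintype.piFinset (fun _ : Fin n => Finset.range (⌊1/ε⌋₊ + 1))).card := by
    apply Finset.card_le_card_of_injOn
      (fun x => fun i : Fin n => ⌊((φ^[(i : ℕ)] x : unitInterval) : ℝ)/ε⌋₊)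
    · intro x _
      rw [Finset.mem_coe, Fintype.mem_piFinset]
      intro i
      rw [Finset.mem_range, Nat.lt_succ_iff]
      apply Nat.floor_le_floor
      exact div_le_div_of_nonneg_right (φ^[(i : ℕ)] x).2.2 hε.le
    · intro x hx y hy hf
      by_contra hne
      obtain ⟨i, hi, hd⟩ := hA x hx y hy hne
      have heq := congrFun hf (⟨i, hi⟩ : Fin n)
      simp only at heq
      have := abs_sub_lt_of_floor_eq hε ((φ^[i] x).2.1) ((φ^[i] y).2.1) heq
      have : dI (φ^[i] x) (φ^[i] y) < ε := this
      linarith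
  simpa [Fintype.card_piFinset] using key


variable {φ : unitInterval → unitInterval} {n : ℕ} {ε : ℝ}

lemma one_mem_sepSets : 1 ∈ sepSets φ n ε := by
  refine ⟨{0}, ?_, Finset.card_singleton _⟩
  intro x hx y hy hne
  rw [Finset.mem_singleton] at hx hy
  exact absurd (hx.trans hy.symm) hne

lemma sepSets_bddAbove (hε : 0 < ε) : BddAbove (sepSets φ n ε) :=
  ⟨(⌊1/ε⌋₊ + 1)^n, fun _ hm => mem_sepSets_le hε hm⟩

lemma le_sepNum (hε : 0 < ε) {m : ℕ} (hm : m ∈ sepSets φ n ε) : m ≤ sepNum dI φ n ε :=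
  le_csSup (sepSets_bddAbove hε) hm

lemma one_le_sepNum (hε : 0 < ε) : 1 ≤ sepNum dI φ n ε :=
  le_sepNum hε one_mem_sepSets

lemma sepNum_le (hε : 0 < ε) : sepNum dI φ n ε ≤ (⌊1/ε⌋₊ + 1)^n :=
  csSup_le ⟨1, one_mem_sepSets⟩ (fun _ hm => mem_sepSets_le hε hm)

lemma g_nonneg (hε : 0 < ε) (N : ℕ) : 0 ≤ Real.log (sepNum dI φ N ε) / N := by
  apply div_nonneg ?_ (Nat.cast_nonneg N)
  apply Real.log_nonneg
  exact_mod_cast one_le_sepNum hε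

lemma g_le (hε : 0 < ε) (N : ℕ) :
    Real.log (sepNum dI φ N ε) / N ≤ Real.log (⌊1/ε⌋₊ + 1) := by
  have hC : (1:ℝ) ≤ (⌊1/ε⌋₊ + 1 : ℕ) := by exact_mod_cast Nat.one_le_iff_ne_zero.2 (by omega)
  rcases Nat.eq_zero_or_pos N with rfl | hN
  · simp only [Nat.cast_zero, div_zero]
    apply Real.log_nonneg
    push_cast
    push_cast at hC
    linarith
  · have h1 : (0:ℝ) < (sepNum dI φ N ε : ℝ) := by exact_mod_cast one_le_sepNum hε
    have h2 : (sepNum dI φ N ε : ℝ) ≤ ((⌊1/ε⌋₊ + 1 : ℕ) : ℝ)^N := by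
      exact_mod_cast sepNum_le hε
    have h3 := Real.log_le_log h1 h2
    rw [Real.log_pow] at h3
    rw [div_le_iff₀ (by exact_mod_cast hN)]
    push_cast at h3 ⊢
    linarith
  
lemma isBoundedUnder_g (hε : 0 < ε) :
    IsBoundedUnder (· ≤ ·) atTop (fun N : ℕ => Real.log (sepNum dI φ N ε) / N) :=
  isBoundedUnder_of ⟨Real.log (⌊1/ε⌋₊ + 1), fun N => g_le hε N⟩

lemma sepExp_nonneg (hε : 0 < ε) : 0 ≤ sepExp dI φ ε := by
  apply le_limsup_of_frequently_le ?_ (isBoundedUnder_g hε)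
  exact (Eventually.of_forall (g_nonneg hε)).frequently

lemma sepExp_le (hε : 0 < ε) : sepExp dI φ ε ≤ Real.log (⌊1/ε⌋₊ + 1) := by
  apply limsup_le_of_le ?_ (Eventually.of_forall (g_le hε))
  exact IsCoboundedUnder.of_frequently_ge (Eventually.of_forall (g_nonneg hε)).frequently

lemma sepExp_ge (hε : 0 < ε) {M : ℕ} (hM : 1 ≤ M)
    (hmem : ∀ N : ℕ, M^N ∈ sepSets φ N ε) : Real.log M ≤ sepExp dI φ ε := by
  apply le_limsup_of_frequently_le ?_ (isBoundedUnder_g hε)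
  apply Eventually.frequently
  filter_upwards [eventually_ge_atTop 1] with N hN
  have h1 : (M^N : ℕ) ≤ sepNum dI φ N ε := le_sepNum hε (hmem N)
  have h1' : ((M:ℝ))^N ≤ (sepNum dI φ N ε : ℝ) := by exact_mod_cast h1
  have h2 := Real.log_le_log (by positivity) h1'
  rw [Real.log_pow] at h2
  rw [le_div_iff₀ (by exact_mod_cast hN)]
  linarith [h2]

/-- Upper bound for `sepExp ε / |log ε|`. -/
lemma ratio_le_two (hε : 0 < ε) (hε' : ε < Real.exp (-1)) :
    sepExp dI φ ε / |Real.log ε| ≤ 2 := by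
  have hlog : Real.log ε < -1 := by
    have := Real.log_lt_log hε hε'
    rwa [Real.log_exp] at this
  have habs : |Real.log ε| = -Real.log ε := abs_of_neg (by linarith)
  have ht : (1:ℝ) < -Real.log ε := by linarith
  have hε1 : ε ≤ 1 := by nlinarith [Real.exp_lt_one_iff.mpr (by norm_num : (-1:ℝ) < 0), hε'.le]
  have h1 : ((⌊1/ε⌋₊ + 1 : ℕ) : ℝ) ≤ 2/ε := by
    push_cast
    have h2 : (⌊1/ε⌋₊ : ℝ) ≤ 1/ε := Nat.floor_le (by positivity)
    have h3 : (1:ℝ) ≤ 1/ε := by rw [le_div_iff₀ hε]; linarith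
    have : 1/ε + 1 ≤ 2/ε := by
      rw [div_add' _ _ _ hε.ne', div_le_div_iff₀ hε hε]
      nlinarith
    linarith
  have h4 : sepExp dI φ ε ≤ Real.log (2/ε) := by
    refine (sepExp_le hε).trans ?_
    apply Real.log_le_log (by positivity)
    exact_mod_cast h1
  have h5 : Real.log (2/ε) = Real.log 2 - Real.log ε := by
    rw [Real.log_div (by norm_num) hε.ne']
  have hlog2 : Real.log 2 ≤ 1 := by
    have := Real.log_le_sub_one_of_pos (by norm_num : (0:ℝ) < 2)
    linarith
  rw [habs, div_le_iff₀ (by linarith)]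
  nlinarith [sepExp_nonneg (φ := φ) hε]


lemma horseshoe_mem_sepSets {φ : unitInterval → unitInterval} {u v : ℝ} {S : ℕ}
    (hS : 2 ≤ S) (huv : u < v) (hu0 : 0 ≤ u) (hv1 : v ≤ 1)
    (haff : ∀ i < S, AffineLeg φ u v S i)
    {ε : ℝ} (hε : 0 < ε) (hεL : ε < (v - u)/(S:ℝ)) (n : ℕ) :
    ((S+1)/2)^n ∈ sepSets φ n ε := by
  have hS0 : (0:ℝ) < S := by exact_mod_cast Nat.lt_of_lt_of_le (by norm_num) hS
  have hD : 0 < (v - u)/(S:ℝ) := div_pos (by linarith) hS0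
  -- extract total coefficient functions
  obtain ⟨c, e, hce⟩ : ∃ c e : ℕ → ℝ, ∀ i, i < S →
      ((∀ x : unitInterval,
        (x : ℝ) ∈ Set.Icc (u + (i : ℝ) * ((v - u) / (S : ℝ)))
          (u + ((i : ℝ) + 1) * ((v - u) / (S : ℝ))) → (φ x : ℝ) = c i * (x : ℝ) + e i) ∧
      (fun t : ℝ => c i * t + e i) '' Set.Icc (u + (i : ℝ) * ((v - u) / (S : ℝ)))
          (u + ((i : ℝ) + 1) * ((v - u) / (S : ℝ))) = Set.Icc u v) := by
    choose c e h1 h2 using haff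
    refine ⟨fun i => if h : i < S then c i h else 1,
            fun i => if h : i < S then e i h else 0, ?_⟩
    intro i hi
    simp only [dif_pos hi]
    exact ⟨h1 i hi, h2 i hi⟩
  set Θ : ℕ → ℝ → ℝ := fun i y => (y - e i)/(c i) with hΘdef
  -- c i ≠ 0
  have hc : ∀ i, i < S → c i ≠ 0 := by
    intro i hi h0
    have him := (hce i hi).2
    have h1 : u ∈ (fun t : ℝ => c i * t + e i) '' Set.Icc (u + (i : ℝ) * ((v - u) / (S : ℝ)))
        (u + ((i : ℝ) + 1) * ((v - u) / (S : ℝ))) := him ▸ Set.left_mem_Icc.2 huv.le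
    have h2 : v ∈ (fun t : ℝ => c i * t + e i) '' Set.Icc (u + (i : ℝ) * ((v - u) / (S : ℝ)))
        (u + ((i : ℝ) + 1) * ((v - u) / (S : ℝ))) := him ▸ Set.right_mem_Icc.2 huv.le
    obtain ⟨x1, _, hx1⟩ := h1
    obtain ⟨x2, _, hx2⟩ := h2
    simp only [h0, zero_mul, zero_add] at hx1 hx2
    rw [hx1] at hx2
    exact absurd hx2 huv.ne
  -- inverse branch property
  have hΘ : ∀ i, i < S → ∀ y ∈ Set.Icc u v,
      Θ i y ∈ Set.Icc (u + (i : ℝ) * ((v - u) / (S : ℝ)))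
        (u + ((i : ℝ) + 1) * ((v - u) / (S : ℝ))) ∧ c i * Θ i y + e i = y := by
    intro i hi y hy
    have him := (hce i hi).2
    rw [← him] at hy
    obtain ⟨x, hx, hxy⟩ := hy
    have hxval : Θ i y = x := by
      rw [hΘdef]
      simp only
      rw [← hxy]
      simp only
      rw [mul_comm (c i) x, add_sub_cancel_right, mul_div_assoc, div_self (hc i hi), mul_one]
    rw [hxval]
    exact ⟨hx, hxy⟩
  -- legs are inside [u,v]
  have leg_sub : ∀ i, i < S → Set.Icc (u + (i : ℝ) * ((v - u) / (S : ℝ)))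
      (u + ((i : ℝ) + 1) * ((v - u) / (S : ℝ))) ⊆ Set.Icc u v := by
    intro i hi x hx
    obtain ⟨hx1, hx2⟩ := hx
    have hiS : ((i : ℝ) + 1) ≤ (S : ℝ) := by exact_mod_cast hi
    have h1 : (0:ℝ) ≤ (i : ℝ) * ((v - u) / (S : ℝ)) :=
      mul_nonneg (Nat.cast_nonneg i) hD.le
    have h2 : ((i : ℝ) + 1) * ((v - u) / (S : ℝ)) ≤ (S : ℝ) * ((v - u) / (S : ℝ)) :=
      mul_le_mul_of_nonneg_right hiS hD.le
    have h3 : (S : ℝ) * ((v - u) / (S : ℝ)) = v - u := by field_simp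
    constructor <;> nlinarith
  -- itinerary points lie in [u,v]
  have pt_mem : ∀ w : List ℕ, (∀ j ∈ w, j < S) → ptA Θ u w ∈ Set.Icc u v := by
    intro w
    induction w with
    | nil => intro _; exact ⟨le_rfl, huv.le⟩
    | cons i r ih =>
      intro hw
      have hi : i < S := hw i (List.mem_cons_self)
      have hr := ih (fun j hj => hw j (List.mem_cons_of_mem _ hj))
      show Θ i (ptA Θ u r) ∈ Set.Icc u v
      exact leg_sub i hi (hΘ i hi _ hr).1
  have pt_cons : ∀ i, i < S → ∀ r : List ℕ, (∀ j ∈ r, j < S) →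
      ptA Θ u (i :: r) ∈ Set.Icc (u + (i : ℝ) * ((v - u) / (S : ℝ)))
        (u + ((i : ℝ) + 1) * ((v - u) / (S : ℝ))) := by
    intro i hi r hr
    exact (hΘ i hi _ (pt_mem r hr)).1
  -- orbit tracking
  have orbit : ∀ j : ℕ, ∀ w : List ℕ, (∀ m ∈ w, m < S) → j ≤ w.length →
      ∀ x : unitInterval, (x : ℝ) = ptA Θ u w →
      ((φ^[j] x : unitInterval) : ℝ) = ptA Θ u (w.drop j) := by
    intro j
    induction j with
    | zero => intro w _ _ x hx; simpa using hx
    | succ j ih =>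
      intro w hw hj x hx
      match w with
      | [] => simp at hj
      | i :: r =>
        have hi : i < S := hw _ (List.mem_cons_self)
        have hrw : ∀ m ∈ r, m < S := fun m hm => hw m (List.mem_cons_of_mem _ hm)
        have key := hΘ i hi _ (pt_mem r hrw)
        have hxleg : (x : ℝ) ∈ Set.Icc (u + (i : ℝ) * ((v - u) / (S : ℝ)))
            (u + ((i : ℝ) + 1) * ((v - u) / (S : ℝ))) := by
          rw [hx]; exact key.1
        have hφx : ((φ x : unitInterval) : ℝ) = ptA Θ u r := by
          rw [(hce i hi).1 x hxleg, hx]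
          exact key.2
        have := ih r hrw (Nat.succ_le_succ_iff.mp (by simpa using hj)) (φ x) hφx
        rw [Function.iterate_succ_apply]
        simpa using this
  -- separation of distinct admissible itineraries
  have sepL : ∀ w w' : List ℕ, w.length = w'.length →
      (∀ j ∈ w, j < S ∧ 2 ∣ j) → (∀ j ∈ w', j < S ∧ 2 ∣ j) → w ≠ w' →
      ∃ jj, jj < w.length ∧ (v - u)/(S:ℝ) ≤ |ptA Θ u (w.drop jj) - ptA Θ u (w'.drop jj)| := by
    intro w
    induction w with
    | nil =>
      intro w' hlen _ _ hne
      exact absurd (List.eq_nil_of_length_eq_zero hlen.symm).symm hne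
    | cons i r ih =>
      intro w' hlen hw hw' hne
      match w' with
      | [] => simp at hlen
      | i' :: r' =>
        by_cases hii : i = i'
        · subst hii
          have hrr : r ≠ r' := by
            intro h; exact hne (by rw [h])
          obtain ⟨jj, hjj, hd⟩ := ih r' (by simpa using hlen)
            (fun j hj => hw j (List.mem_cons_of_mem _ hj))
            (fun j hj => hw' j (List.mem_cons_of_mem _ hj)) hrr
          exact ⟨jj + 1, by simpa using Nat.succ_lt_succ hjj, by simpa using hd⟩
        · refine ⟨0, by simp, ?_⟩
          simp only [List.drop_zero]
          have hi : i < S := (hw i (List.mem_cons_self)).1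
          have hi' : i' < S := (hw' i' (List.mem_cons_self)).1
          have h1 := pt_cons i hi r (fun j hj => (hw j (List.mem_cons_of_mem _ hj)).1)
          have h2 := pt_cons i' hi' r' (fun j hj => (hw' j (List.mem_cons_of_mem _ hj)).1)
          obtain ⟨p, hp⟩ := (hw i (List.mem_cons_self)).2
          obtain ⟨p', hp'⟩ := (hw' i' (List.mem_cons_self)).2
          rcases Nat.lt_or_ge i i' with hlt | hge
          · have hgap : i + 2 ≤ i' := by omega
            have hgapR : (i : ℝ) + 2 ≤ (i' : ℝ) := by exact_mod_cast hgap
            rw [le_abs]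
            right
            have hA := h1.2
            have hB := h2.1
            nlinarith [hD.le]
          · have hlt' : i' < i := by omega
            have hgap : i' + 2 ≤ i := by omega
            have hgapR : (i' : ℝ) + 2 ≤ (i : ℝ) := by exact_mod_cast hgap
            rw [le_abs]
            left
            have hA := h2.2
            have hB := h1.1
            nlinarith [hD.le]
  -- the alphabet of even legs
  set M := (S + 1) / 2 with hM
  set Alpha : Finset ℕ := (Finset.range M).image (fun j => 2 * j) with hAlpha
  have hAlphaCard : Alpha.card = M :=
    (Finset.card_image_of_injective _ (fun a b h => by omega)).trans (Finset.card_range M)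
  have hAlphaMem : ∀ i ∈ Alpha, i < S ∧ 2 ∣ i := by
    intro i hi
    rw [hAlpha, Finset.mem_image] at hi
    obtain ⟨j, hj, rfl⟩ := hi
    rw [Finset.mem_range] at hj
    constructor
    · omega
    · exact ⟨j, rfl⟩
  set W := Fintype.piFinset (fun _ : Fin n => Alpha) with hW
  have hWlt : ∀ w : Fin n → ℕ, w ∈ W → ∀ j ∈ List.ofFn w, j < S ∧ 2 ∣ j := by
    intro w hw j hj
    rw [List.mem_ofFn] at hj
    obtain ⟨k, rfl⟩ := hj
    exact hAlphaMem _ (Fintype.mem_piFinset.1 hw k)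
  have mem01 : ∀ w : Fin n → ℕ, w ∈ W → ptA Θ u (List.ofFn w) ∈ Set.Icc (0:ℝ) 1 := by
    intro w hw
    have := pt_mem (List.ofFn w) (fun j hj => (hWlt w hw j hj).1)
    exact ⟨hu0.trans this.1, this.2.trans hv1⟩
  let f : {w // w ∈ W} → unitInterval := fun w => ⟨ptA Θ u (List.ofFn w.1), mem01 w.1 w.2⟩
  -- main separation property of the image set
  have main : ∀ w w' : {x // x ∈ W}, w ≠ w' →
      ∃ i, i < n ∧ ε < dI (φ^[i] (f w)) (φ^[i] (f w')) := by
    intro w w' hne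
    have hofn : List.ofFn w.1 ≠ List.ofFn w'.1 := by
      intro h
      exact hne (Subtype.ext (List.ofFn_injective h))
    obtain ⟨jj, hjj, hd⟩ := sepL (List.ofFn w.1) (List.ofFn w'.1)
      (by simp) (hWlt w.1 w.2) (hWlt w'.1 w'.2) hofn
    rw [List.length_ofFn] at hjj
    refine ⟨jj, hjj, ?_⟩
    have hx := orbit jj (List.ofFn w.1) (fun m hm => (hWlt w.1 w.2 m hm).1)
      (by rw [List.length_ofFn]; exact hjj.le) (f w) rfl
    have hy := orbit jj (List.ofFn w'.1) (fun m hm => (hWlt w'.1 w'.2 m hm).1)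
      (by rw [List.length_ofFn]; exact hjj.le) (f w') rfl
    show ε < |((φ^[jj] (f w) : unitInterval) : ℝ) - ((φ^[jj] (f w') : unitInterval) : ℝ)|
    rw [hx, hy]
    linarith
  -- build the Finset
  refine ⟨W.attach.image f, ?_, ?_⟩
  · intro x hx y hy hxy
    rw [Finset.mem_image] at hx hy
    obtain ⟨w, _, rfl⟩ := hx
    obtain ⟨w', _, rfl⟩ := hy
    obtain ⟨i, hi, hsep⟩ := main w w' (fun h => hxy (by rw [h]))
    exact ⟨i, hi, hsep⟩
  · rw [Finset.card_image_of_injOn, Finset.card_attach]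
    · rw [hW, Fintype.card_piFinset]
      simp [hAlphaCard]
    · intro w _ w' _ hff
      by_contra hne
      obtain ⟨i, _, hsep⟩ := main w w' hne
      rw [hff] at hsep
      have : dI (φ^[i] (f w')) (φ^[i] (f w')) = 0 := by
        show |_ - _| = (0:ℝ)
        simp
      rw [this] at hsep
      linarith

end HorseshoeProof

open HorseshoeProof in
/-- Lower bound for the lower metric mean dimension of an interval map built from a
sequence of full affine horseshoes `I_k = [a_{k-1}, a_k]` with `s_k` equal legs. -/
theorem mdimLower_ge_of_affine_horseshoes (φ : unitInterval → unitInterval)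
    (hφ : Continuous φ) (a : ℕ → ℝ) (ha0 : a 0 = 0) (hmono : StrictMono a)
    (hsup : (⨆ k, a k) = 1) (s : ℕ → ℕ) (hs2 : ∀ k, 1 ≤ k → 2 ≤ s k)
    (hsmono : ∀ k, 1 ≤ k → s k ≤ s (k + 1))
    (haff : ∀ k, 1 ≤ k → ∀ i < s k, AffineLeg φ (a (k - 1)) (a k) (s k) i) :
    Filter.liminf (fun k : ℕ =>
        (Real.log (s (k - 1)) / Real.log (s k)) /
          (1 - Real.log (a k - a (k - 1)) / Real.log (s k))) Filter.atTop
      ≤ mdimLower dI φ := by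

  classical
  set E : ℕ → ℝ := fun k =>
    (Real.log (s (k - 1)) / Real.log (s k)) /
      (1 - Real.log (a k - a (k - 1)) / Real.log (s k)) with hE
  set T : ℝ := Filter.liminf E Filter.atTop with hT
  -- basic facts
  have hbdd : BddAbove (Set.range a) := by
    by_contra h
    rw [Real.iSup_of_not_bddAbove h] at hsup
    norm_num at hsup
  have ha_le1 : ∀ k, a k ≤ 1 := fun k => hsup ▸ le_ciSup hbdd k
  have ha_nonneg : ∀ k, 0 ≤ a k := fun k => ha0 ▸ hmono.monotone (Nat.zero_le k)
  have haL : ∀ k, 1 ≤ k → 0 < a k - a (k - 1) :=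
    fun k hk => sub_pos.2 (hmono (by omega))
  have haLnonneg : ∀ k, 0 ≤ a k - a (k - 1) :=
    fun k => sub_nonneg.2 (hmono.monotone (Nat.sub_le k 1))
  have haLle1 : ∀ k, a k - a (k - 1) ≤ 1 :=
    fun k => by linarith [ha_le1 k, ha_nonneg (k - 1)]
  have ha_lim : Filter.Tendsto a atTop (nhds 1) := by
    have := tendsto_atTop_ciSup hmono.monotone hbdd
    rwa [hsup] at this
  have hL_lim : Filter.Tendsto (fun k => a k - a (k - 1)) atTop (nhds 0) := by
    have h2 : Filter.Tendsto (fun k : ℕ => a (k - 1)) atTop (nhds 1) :=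
      ha_lim.comp (tendsto_sub_atTop_nat 1)
    have := ha_lim.sub h2
    simpa using this
  have hlam : Filter.Tendsto (fun k => -Real.log (a k - a (k - 1))) atTop atTop := by
    have h1 : Filter.Tendsto (fun k => Real.log (a k - a (k - 1))) atTop atBot := by
      apply Real.tendsto_log_nhdsGT_zero.comp
      apply tendsto_nhdsWithin_of_tendsto_nhds_of_eventually_within _ hL_lim
      filter_upwards [eventually_ge_atTop 1] with k hk
      exact haL k hk
    exact tendsto_neg_atBot_atTop.comp h1
  -- rewriting the liminf expression
  have hexpr : ∀ k, 1 ≤ k →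
      E k = Real.log (s (k - 1)) / (Real.log (s k) - Real.log (a k - a (k - 1))) := by
    intro k hk
    have hσ : 0 < Real.log (s k) := Real.log_pos (by exact_mod_cast hs2 k hk)
    rw [hE]
    simp only
    rw [one_sub_div hσ.ne', div_div_eq_mul_div, div_mul_cancel₀ _ hσ.ne']
  have hE_nonneg : ∀ k, 0 ≤ E k := by
    intro k
    have h1 : 0 ≤ Real.log (s (k - 1)) / Real.log (s k) :=
      div_nonneg (Real.log_natCast_nonneg _) (Real.log_natCast_nonneg _)
    have h2 : Real.log (a k - a (k - 1)) ≤ 0 := Real.log_nonpos (haLnonneg k) (haLle1 k)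
    have h3 : Real.log (a k - a (k - 1)) / Real.log (s k) ≤ 0 :=
      div_nonpos_of_nonpos_of_nonneg h2 (Real.log_natCast_nonneg _)
    exact div_nonneg h1 (by linarith)
  -- the main eventual lower bound
  have key : ∀ δ : ℝ, 0 < δ →
      ∀ᶠ ε in nhdsWithin (0:ℝ) (Set.Ioi 0),
        T - δ ≤ sepExp dI φ ε / |Real.log ε| := by
    intro δ hδ
    have hJev : ∀ᶠ k in atTop, T - δ/2 < E k :=
      eventually_lt_of_lt_liminf (by rw [← hT]; linarith)
        (isBoundedUnder_of ⟨0, fun k => hE_nonneg k⟩)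
    obtain ⟨J, hJ⟩ := eventually_atTop.1 hJev
    set k₀ := max J 1 with hk₀
    set B : ℝ := max (max 1 (2 * Real.log 2 / δ))
      (-Real.log (a k₀ - a (k₀ - 1)) + Real.log (s k₀)) with hB
    filter_upwards [Ioo_mem_nhdsGT
      (show (0:ℝ) < Real.exp (-(B+1)) from Real.exp_pos _)] with ε hεIoo
    obtain ⟨hε0, hεη⟩ := hεIoo
    set t := -Real.log ε with htdef
    clear_value t
    have hlogε : Real.log ε < -(B+1) := by
      have := Real.log_lt_log hε0 hεη
      rwa [Real.log_exp] at this
    have hB1 : (1:ℝ) ≤ B := le_trans (le_max_left _ _) (le_max_left _ _)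
    have htB : B + 1 < t := by rw [htdef]; linarith
    have htpos : 0 < t := by linarith
    have habs : |Real.log ε| = t := by
      rw [abs_of_neg (show Real.log ε < 0 by linarith), htdef]
    rcases le_or_gt (T - δ) 0 with hTδ | hTδ
    · refine hTδ.trans ?_
      exact div_nonneg (sepExp_nonneg hε0) (abs_nonneg _)
    -- main case
    obtain ⟨K, hK⟩ := eventually_atTop.1 (hlam.eventually_ge_atTop t)
    set K' := max K k₀ with hK'
    set P : ℕ → Prop := fun k =>
      1 ≤ k ∧ -Real.log (a k - a (k - 1)) + Real.log (s k) < t with hPdef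
    have hPk₀ : P k₀ := by
      constructor
      · exact le_max_right _ _
      · have : -Real.log (a k₀ - a (k₀ - 1)) + Real.log (s k₀) ≤ B :=
          le_max_right _ _
        linarith
    have hk₀K' : k₀ ≤ K' := le_max_right _ _
    set k₁ := Nat.findGreatest P K' with hk₁def
    have hPk₁ : P k₁ := Nat.findGreatest_spec hk₀K' hPk₀
    have hk₀k₁ : k₀ ≤ k₁ := Nat.le_findGreatest hk₀K' hPk₀
    have hk₁1 : 1 ≤ k₁ := hPk₁.1
    have hnext : t ≤ -Real.log (a (k₁ + 1) - a k₁) + Real.log (s (k₁ + 1)) := by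
      by_cases h : k₁ + 1 ≤ K'
      · have hnp : ¬ (1 ≤ k₁ + 1 ∧
            -Real.log (a (k₁ + 1) - a ((k₁ + 1) - 1)) + Real.log (s (k₁ + 1)) < t) :=
          Nat.findGreatest_is_greatest (Nat.lt_succ_self k₁) h
        push_neg at hnp
        have := hnp (by omega)
        simpa using this
      · have hKle : K ≤ k₁ + 1 := by omega
        have h1 := hK (k₁ + 1) hKle
        have h2 : (0:ℝ) ≤ Real.log (s (k₁ + 1)) := Real.log_natCast_nonneg _
        have h3 : a (k₁ + 1) - a ((k₁ + 1) - 1) = a (k₁ + 1) - a k₁ := by simp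
        rw [h3] at h1
        linarith
    -- use liminf bound at k₁ + 1
    have hTk : T - δ/2 < E (k₁ + 1) := hJ (k₁ + 1) (by
      have : J ≤ k₀ := le_max_left _ _
      omega)
    have hs2' : 2 ≤ s (k₁ + 1) := hs2 _ (by omega)
    have hσpos : 0 < Real.log (s (k₁ + 1)) := Real.log_pos (by exact_mod_cast hs2')
    have hLpos : 0 < a (k₁ + 1) - a k₁ := by
      have := haL (k₁ + 1) (by omega); simpa using this
    have hlogL : Real.log (a (k₁ + 1) - a k₁) ≤ 0 :=
      Real.log_nonpos hLpos.le (by linarith [ha_le1 (k₁+1), ha_nonneg k₁])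
    have hDen : 0 < Real.log (s (k₁ + 1)) - Real.log (a (k₁ + 1) - a k₁) := by linarith
    have hexpr1 : E (k₁ + 1) =
        Real.log (s k₁) / (Real.log (s (k₁ + 1)) - Real.log (a (k₁ + 1) - a k₁)) := by
      have := hexpr (k₁ + 1) (by omega)
      simpa using this
    have hTpos' : 0 < T - δ/2 := by linarith
    -- (T - δ/2) * t ≤ log (s k₁)
    have hstep : (T - δ/2) * t ≤ Real.log (s k₁) := by
      have h1 : T - δ/2 ≤ Real.log (s k₁) /
          (Real.log (s (k₁ + 1)) - Real.log (a (k₁ + 1) - a k₁)) := by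
        rw [← hexpr1]; exact hTk.le
      have h2 : t ≤ Real.log (s (k₁ + 1)) - Real.log (a (k₁ + 1) - a k₁) := by linarith
      calc (T - δ/2) * t
          ≤ (Real.log (s k₁) / (Real.log (s (k₁ + 1)) - Real.log (a (k₁ + 1) - a k₁))) * t :=
            mul_le_mul_of_nonneg_right h1 htpos.le
        _ ≤ (Real.log (s k₁) / (Real.log (s (k₁ + 1)) - Real.log (a (k₁ + 1) - a k₁))) *
              (Real.log (s (k₁ + 1)) - Real.log (a (k₁ + 1) - a k₁)) := by
            apply mul_le_mul_of_nonneg_left h2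
            exact le_trans hTpos'.le h1
        _ = Real.log (s k₁) := div_mul_cancel₀ _ hDen.ne'
    -- the horseshoe at level k₁ applies at scale ε
    have hsk₁2 : 2 ≤ s k₁ := hs2 k₁ hk₁1
    have hsk₁pos : (0:ℝ) < (s k₁ : ℝ) := by exact_mod_cast Nat.lt_of_lt_of_le (by norm_num) hsk₁2
    have hεhorse : ε < (a k₁ - a (k₁ - 1)) / (s k₁ : ℝ) := by
      have h3 : -Real.log (a k₁ - a (k₁ - 1)) + Real.log (s k₁) < t := hPk₁.2
      have hq : 0 < (a k₁ - a (k₁ - 1)) / (s k₁ : ℝ) := div_pos (haL k₁ hk₁1) hsk₁pos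
      have hεexp : ε = Real.exp (Real.log ε) := (Real.exp_log hε0).symm
      rw [hεexp, ← Real.exp_log hq]
      apply Real.exp_lt_exp.2
      rw [Real.log_div (haL k₁ hk₁1).ne' hsk₁pos.ne']
      rw [htdef] at h3
      linarith
    have hσk₁ : Real.log (s k₁) - Real.log 2 ≤ sepExp dI φ ε := by
      have hmem : ∀ N : ℕ, ((s k₁ + 1)/2)^N ∈ sepSets φ N ε := fun N =>
        horseshoe_mem_sepSets hsk₁2 (hmono (by omega)) (ha_nonneg _) (ha_le1 _)
          (haff k₁ hk₁1) hε0 hεhorse N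
      have hM1 : 1 ≤ (s k₁ + 1)/2 := by omega
      have hge := sepExp_ge hε0 hM1 hmem
      have hMhalf : (s k₁ : ℝ)/2 ≤ (((s k₁ + 1)/2 : ℕ) : ℝ) := by
        have h4 : s k₁ ≤ 2 * ((s k₁ + 1)/2) := by omega
        have h5 : (s k₁ : ℝ) ≤ 2 * (((s k₁ + 1)/2 : ℕ) : ℝ) := by exact_mod_cast h4
        linarith
      have hlogM : Real.log ((s k₁ : ℝ)/2) ≤ Real.log (((s k₁ + 1)/2 : ℕ)) :=
        Real.log_le_log (by positivity) hMhalf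
      rw [Real.log_div hsk₁pos.ne' two_ne_zero] at hlogM
      linarith
    -- conclude
    have hδt : 2 * Real.log 2 / δ ≤ B := le_trans (le_max_right _ _) (le_max_left _ _)
    have hlog2t : Real.log 2 ≤ (δ/2) * t := by
      have h6 : 2 * Real.log 2 / δ < t := by linarith
      have h7 : 2 * Real.log 2 < δ * t := by
        rw [div_lt_iff₀ hδ] at h6
        linarith
      linarith
    rw [habs, le_div_iff₀ htpos]
    nlinarith
  -- conclude via liminf
  have hco : IsCoboundedUnder (· ≥ ·) (nhdsWithin (0:ℝ) (Set.Ioi 0))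
      (fun ε => sepExp dI φ ε / |Real.log ε|) := by
    apply IsCoboundedUnder.of_frequently_le (a := 2)
    apply Eventually.frequently
    filter_upwards [Ioo_mem_nhdsGT
      (show (0:ℝ) < Real.exp (-1) from Real.exp_pos _)] with ε hε
    exact ratio_le_two hε.1 hε.2
  by_contra hcon
  push_neg at hcon
  have hδ : 0 < (T - mdimLower dI φ) / 2 := by
    rw [hT] at hcon ⊢
    linarith
  have := le_liminf_of_le hco (key _ hδ)
  have hmd : mdimLower dI φ =
      Filter.liminf (fun ε : ℝ => sepExp dI φ ε / |Real.log ε|)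
        (nhdsWithin (0:ℝ) (Set.Ioi 0)) := rfl
  rw [← hmd] at this
  rw [hT] at hcon
  linarith
end
end

section
/- Let φ : [0,1] → [0,1] be continuous and suppose that for each k ≥ 1 there is an interval I_k ⊆ [0,1] which is an s_k-horseshoe for φ consisting of s_k subintervals of equal length. Set ε_k = |I_k|/s_k, where |I_k| is the length of I_k, and assume ε_k → 0 as k → ∞. Then the upper metric mean dimension of ([0,1], |·|, φ) is at least limsup_{k→∞} log s_k / |log ε_k|. -/
open Filter Set Topology

noncomputable section

lemma abs_sub_lt_of_floor_eq {u v ε : ℝ} (hε : 0 < ε) (hu : 0 ≤ u) (hv : 0 ≤ v)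
    (h : ⌊u / ε⌋₊ = ⌊v / ε⌋₊) : |u - v| < ε := by
  have h1 : (⌊u / ε⌋₊ : ℝ) ≤ u / ε := Nat.floor_le (div_nonneg hu hε.le)
  have h2 : u / ε < ⌊u / ε⌋₊ + 1 := Nat.lt_floor_add_one _
  have h3 : (⌊v / ε⌋₊ : ℝ) ≤ v / ε := Nat.floor_le (div_nonneg hv hε.le)
  have h4 : v / ε < ⌊v / ε⌋₊ + 1 := Nat.lt_floor_add_one _
  rw [h] at h1 h2
  rw [abs_sub_lt_iff]
  have e1 : (u / ε - v / ε) * ε < 1 * ε := mul_lt_mul_of_pos_right (by linarith) hε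
  have e2 : (v / ε - u / ε) * ε < 1 * ε := mul_lt_mul_of_pos_right (by linarith) hε
  have eu : u / ε * ε = u := div_mul_cancel₀ u hε.ne'
  have ev : v / ε * ε = v := div_mul_cancel₀ v hε.ne'
  constructor <;> nlinarith [e1, e2, eu, ev]

lemma sep_card_le {φ : unitInterval → unitInterval} {ε : ℝ} (hε : 0 < ε) {n : ℕ}
    {A : Finset unitInterval}
    (hA : ∀ x ∈ A, ∀ y ∈ A, x ≠ y → ∃ i < n, ε < dI (φ^[i] x) (φ^[i] y)) :
    A.card ≤ (⌊1 / ε⌋₊ + 1) ^ n := by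
  classical
  set K := ⌊1 / ε⌋₊ with hK
  have hmap : ∀ (x : unitInterval) (i : ℕ), ⌊(φ^[i] x : ℝ) / ε⌋₊ < K + 1 := by
    intro x i
    have h1 : (φ^[i] x : ℝ) ≤ 1 := (φ^[i] x).2.2
    have : (φ^[i] x : ℝ) / ε ≤ 1 / ε := by gcongr
    exact lt_of_le_of_lt (Nat.floor_mono this) (Nat.lt_succ_self K)
  set F : unitInterval → (Fin n → Fin (K + 1)) :=
    fun x i => ⟨⌊(φ^[(i : ℕ)] x : ℝ) / ε⌋₊, hmap x i⟩ with hF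
  have hinj : Set.InjOn F A := by
    intro x hx y hy hxy
    by_contra hne
    obtain ⟨i, hi, hd⟩ := hA x hx y hy hne
    have := congrFun hxy ⟨i, hi⟩
    have hfl : ⌊(φ^[i] x : ℝ) / ε⌋₊ = ⌊(φ^[i] y : ℝ) / ε⌋₊ := by
      simpa [hF] using this
    have := abs_sub_lt_of_floor_eq hε (φ^[i] x).2.1 (φ^[i] y).2.1 hfl
    exact absurd hd (by simpa [dI] using this.not_gt)
  calc A.card ≤ (Finset.univ : Finset (Fin n → Fin (K + 1))).card := by
        apply Finset.card_le_card_of_injOn F (fun _ _ => Finset.mem_univ _) hinj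
    _ = (K + 1) ^ n := by simp [Fintype.card_fun]

lemma sep_set_nonempty {φ : unitInterval → unitInterval} {n : ℕ} {ε : ℝ} :
    (0 : ℕ) ∈ {m : ℕ | ∃ A : Finset unitInterval,
      (∀ x ∈ A, ∀ y ∈ A, x ≠ y → ∃ i < n, ε < dI (φ^[i] x) (φ^[i] y)) ∧ A.card = m} :=
  ⟨∅, by simp, by simp⟩

lemma sep_set_bddAbove {φ : unitInterval → unitInterval} {ε : ℝ} (hε : 0 < ε) (n : ℕ) :
    BddAbove {m : ℕ | ∃ A : Finset unitInterval,
      (∀ x ∈ A, ∀ y ∈ A, x ≠ y → ∃ i < n, ε < dI (φ^[i] x) (φ^[i] y)) ∧ A.card = m} := by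
  refine ⟨(⌊1 / ε⌋₊ + 1) ^ n, fun m hm => ?_⟩
  obtain ⟨A, hA, rfl⟩ := hm
  exact sep_card_le hε hA

lemma sepNum_le {φ : unitInterval → unitInterval} {ε : ℝ} (hε : 0 < ε) (n : ℕ) :
    sepNum dI φ n ε ≤ (⌊1 / ε⌋₊ + 1) ^ n := by
  apply csSup_le ⟨0, sep_set_nonempty⟩
  rintro m ⟨A, hA, rfl⟩
  exact sep_card_le hε hA

lemma one_le_sepNum {φ : unitInterval → unitInterval} {ε : ℝ} (hε : 0 < ε) (n : ℕ) :
    1 ≤ sepNum dI φ n ε := by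
  apply le_csSup (sep_set_bddAbove hε n)
  refine ⟨{⟨0, by norm_num, by norm_num⟩}, ?_, by simp⟩
  intro x hx y hy hxy
  simp only [Finset.mem_singleton] at hx hy
  exact absurd (hx.trans hy.symm) hxy

lemma le_sepNum_of_witness {φ : unitInterval → unitInterval} {ε : ℝ} (hε : 0 < ε) {n M : ℕ}
    {A : Finset unitInterval}
    (hA : ∀ x ∈ A, ∀ y ∈ A, x ≠ y → ∃ i < n, ε < dI (φ^[i] x) (φ^[i] y))
    (hcard : A.card = M) : M ≤ sepNum dI φ n ε :=
  le_csSup (sep_set_bddAbove hε n) ⟨A, hA, hcard⟩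

lemma sepExp_term_nonneg {φ : unitInterval → unitInterval} {ε : ℝ} (hε : 0 < ε) (n : ℕ) :
    0 ≤ Real.log (sepNum dI φ n ε) / n := by
  apply div_nonneg _ (Nat.cast_nonneg n)
  apply Real.log_nonneg
  exact_mod_cast one_le_sepNum hε n

lemma sepExp_term_le {φ : unitInterval → unitInterval} {ε : ℝ} (hε : 0 < ε) (n : ℕ) :
    Real.log (sepNum dI φ n ε) / n ≤ Real.log (⌊1 / ε⌋₊ + 1) := by
  have hK1 : (0 : ℝ) ≤ Real.log (⌊1 / ε⌋₊ + 1) := by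
    apply Real.log_nonneg; push_cast; linarith [Nat.cast_nonneg (α := ℝ) ⌊1 / ε⌋₊]
  rcases Nat.eq_zero_or_pos n with rfl | hn
  · simpa using hK1
  · rw [div_le_iff₀ (by exact_mod_cast hn)]
    have h1 : (sepNum dI φ n ε : ℝ) ≤ ((⌊1 / ε⌋₊ + 1 : ℕ) : ℝ) ^ n := by
      exact_mod_cast sepNum_le hε n
    calc Real.log (sepNum dI φ n ε) ≤ Real.log (((⌊1 / ε⌋₊ + 1 : ℕ) : ℝ) ^ n) := by
          apply Real.log_le_log (by exact_mod_cast one_le_sepNum hε n : (0:ℝ) < _) h1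
      _ = n * Real.log ((⌊1 / ε⌋₊ + 1 : ℕ) : ℝ) := by rw [Real.log_pow]
      _ = Real.log (⌊1 / ε⌋₊ + 1) * n := by push_cast; ring

lemma sepExp_nonneg {φ : unitInterval → unitInterval} {ε : ℝ} (hε : 0 < ε) :
    0 ≤ sepExp dI φ ε := by
  apply Filter.le_limsup_of_frequently_le
  · exact Filter.Frequently.of_forall (sepExp_term_nonneg hε)
  · exact Filter.isBoundedUnder_of ⟨_, sepExp_term_le hε⟩

lemma sepExp_le {φ : unitInterval → unitInterval} {ε : ℝ} (hε : 0 < ε) :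
    sepExp dI φ ε ≤ Real.log (⌊1 / ε⌋₊ + 1) :=
  Filter.limsup_le_of_le (Filter.isCoboundedUnder_le_of_le _ (sepExp_term_nonneg hε))
    (Filter.Eventually.of_forall (sepExp_term_le hε))

lemma sepExp_le_two_abs_log {φ : unitInterval → unitInterval} {ε : ℝ} (hε : 0 < ε)
    (hε2 : ε ≤ 1 / 2) : sepExp dI φ ε ≤ 2 * |Real.log ε| := by
  have h1 : (⌊1 / ε⌋₊ : ℝ) ≤ 1 / ε := Nat.floor_le (by positivity)
  have h2 : (⌊1 / ε⌋₊ : ℝ) + 1 ≤ (1 / ε) ^ 2 := by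
    rw [div_pow, one_pow, ← sub_nonneg]
    have hnum : (0 : ℝ) ≤ (1 - ε - ε ^ 2) / ε ^ 2 := div_nonneg (by nlinarith) (sq_nonneg ε)
    have heq : 1 / ε ^ 2 - (1 / ε + 1) = (1 - ε - ε ^ 2) / ε ^ 2 := by field_simp; ring
    linarith
  have h3 : Real.log ε < 0 := Real.log_neg hε (by linarith)
  calc sepExp dI φ ε ≤ Real.log (⌊1 / ε⌋₊ + 1) := sepExp_le hε
    _ ≤ Real.log ((1 / ε) ^ 2) := Real.log_le_log (by positivity) h2
    _ = 2 * (-Real.log ε) := by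
        rw [Real.log_pow]; push_cast
        rw [Real.log_div one_ne_zero hε.ne', Real.log_one]; ring
    _ = 2 * |Real.log ε| := by rw [abs_of_neg h3]

lemma log_le_sepExp {φ : unitInterval → unitInterval} {ε : ℝ} {M : ℕ} (hε : 0 < ε)
    (hM : 1 ≤ M) (h : ∀ n, M ^ n ≤ sepNum dI φ n ε) : Real.log M ≤ sepExp dI φ ε := by
  apply Filter.le_limsup_of_frequently_le _ (Filter.isBoundedUnder_of ⟨_, sepExp_term_le hε⟩)
  apply Filter.Eventually.frequently
  rw [Filter.eventually_atTop]
  refine ⟨1, fun n hn => ?_⟩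
  have hnR : (0 : ℝ) < n := by exact_mod_cast hn
  rw [le_div_iff₀ hnR]
  have h1 : ((M : ℝ)) ^ n ≤ (sepNum dI φ n ε : ℝ) := by exact_mod_cast h n
  calc Real.log M * n = Real.log ((M : ℝ) ^ n) := by rw [Real.log_pow]; ring
    _ ≤ Real.log (sepNum dI φ n ε) := by
        apply Real.log_le_log (pow_pos (by exact_mod_cast hM) n) h1

lemma horseshoe_sepNum {φ : unitInterval → unitInterval} {A B : ℝ} (hab : A < B)
    (hsub : Set.Icc A B ⊆ Set.Icc (0 : ℝ) 1) {S : ℕ} (hs : 1 ≤ S)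
    (hh : ∀ i < S, Set.Icc A B ⊆ (fun x : unitInterval => (φ x : ℝ)) ''
      {x : unitInterval | (x : ℝ) ∈ Set.Icc (A + (i : ℝ) * ((B - A) / (S : ℝ)))
        (A + ((i : ℝ) + 1) * ((B - A) / (S : ℝ)))}) (n : ℕ) :
    ((S + 1) / 2) ^ n ≤ sepNum dI φ n ((B - A) / (S : ℝ) / 2) := by
  classical
  set e := (B - A) / (S : ℝ) with hedef
  have hS0 : (0 : ℝ) < S := by exact_mod_cast hs
  have he : 0 < e := div_pos (by linarith) hS0
  have hSe : (S : ℝ) * e = B - A := by rw [hedef, mul_comm]; exact div_mul_cancel₀ (B - A) hS0.ne'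
  set m := (S + 1) / 2 with hmdef
  have hm1 : 1 ≤ m := by omega
  set leg : ℕ → Set ℝ := fun i => Set.Icc (A + (i : ℝ) * e) (A + ((i : ℝ) + 1) * e) with hleg
  -- legs are inside [A, B]
  have hleg_sub : ∀ i : ℕ, i < S → ∀ x ∈ leg i, x ∈ Set.Icc A B := by
    intro i hi x hx
    have hi' : (i : ℝ) + 1 ≤ (S : ℝ) := by exact_mod_cast hi
    obtain ⟨hx1, hx2⟩ := hx
    constructor
    · nlinarith [mul_nonneg (Nat.cast_nonneg (α := ℝ) i) he.le]
    · nlinarith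
  -- separation between distinct even legs
  have hsep : ∀ u v : ℕ, u ≠ v → ∀ x ∈ leg (2 * u), ∀ y ∈ leg (2 * v), e ≤ |x - y| := by
    have base : ∀ u v : ℕ, u < v → ∀ x ∈ leg (2 * u), ∀ y ∈ leg (2 * v), e ≤ |x - y| := by
      intro u v huv x hx y hy
      have hc : (u : ℝ) + 1 ≤ (v : ℝ) := by exact_mod_cast huv
      obtain ⟨hx1, hx2⟩ := hx
      obtain ⟨hy1, hy2⟩ := hy
      push_cast at hx1 hx2 hy1 hy2
      have : x + e ≤ y := by nlinarith
      exact le_abs.2 (Or.inr (by linarith))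
    intro u v huv x hx y hy
    rcases huv.lt_or_gt with h | h
    · exact base u v h x hx y hy
    · rw [abs_sub_comm]; exact base v u h y hy x hx
  -- itinerary construction
  have key : ∀ (N : ℕ) (w : Fin N → Fin m), ∃ x : unitInterval, (x : ℝ) ∈ Set.Icc A B ∧
      ∀ j : Fin N, (φ^[(j : ℕ)] x : ℝ) ∈ leg (2 * (w j : ℕ)) := by
    intro N
    induction N with
    | zero => exact fun w => ⟨⟨A, hsub ⟨le_refl A, hab.le⟩⟩, ⟨le_refl A, hab.le⟩, fun j => j.elim0⟩
    | succ N ih =>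
      intro w
      obtain ⟨x, hx, hit⟩ := ih (fun j => w j.succ)
      have h2i : 2 * (w 0 : ℕ) < S := by have := (w 0).2; omega
      obtain ⟨y, hy, hφy⟩ := hh (2 * (w 0 : ℕ)) h2i hx
      have hφ : φ y = x := Subtype.ext hφy
      refine ⟨y, hleg_sub _ h2i _ hy, ?_⟩
      intro j
      refine Fin.cases ?_ (fun i => ?_) j
      · simp only [Fin.val_zero, Function.iterate_zero_apply, hleg, Set.mem_Icc]
        push_cast
        simpa [Set.mem_Icc] using hy
      · have : (φ^[(i.succ : ℕ)] y : ℝ) = (φ^[(i : ℕ)] x : ℝ) := by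
          rw [Fin.val_succ, Function.iterate_succ_apply, hφ]
        rw [this]
        exact hit i
  choose G hGmem hGit using key n
  have hGsep : ∀ w w' : Fin n → Fin m, ∀ j : Fin n, w j ≠ w' j →
      e ≤ |(φ^[(j : ℕ)] (G w) : ℝ) - (φ^[(j : ℕ)] (G w') : ℝ)| := by
    intro w w' j hj
    exact hsep _ _ (fun h => hj (Fin.ext (by omega))) _ (hGit w j) _ (hGit w' j)
  have hGinj : Function.Injective G := by
    intro w w' hww
    by_contra hne
    obtain ⟨j, hj⟩ := Function.ne_iff.mp hne
    have := hGsep w w' j hj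
    rw [hww] at this
    simp at this
    linarith
  apply le_sepNum_of_witness (half_pos he) (A := Finset.image G Finset.univ)
  · intro x hx y hy hxy
    obtain ⟨w, -, rfl⟩ := Finset.mem_image.mp hx
    obtain ⟨w', -, rfl⟩ := Finset.mem_image.mp hy
    have hww : w ≠ w' := fun h => hxy (by rw [h])
    obtain ⟨j, hj⟩ := Function.ne_iff.mp hww
    refine ⟨(j : ℕ), j.isLt, ?_⟩
    have := hGsep w w' j hj
    show e / 2 < |(φ^[(j : ℕ)] (G w) : ℝ) - (φ^[(j : ℕ)] (G w') : ℝ)|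
    linarith
  · rw [Finset.card_image_of_injective _ hGinj, Finset.card_univ]
    simp [Fintype.card_fun]

/-- If for each `k` the interval `[a_k, b_k] ⊆ [0,1]` is an `s_k`-horseshoe for `φ` with
equal-length legs and `ε_k = (b_k - a_k)/s_k → 0`, then the upper metric mean dimension is
at least `limsup_k log s_k / |log ε_k|`. -/
theorem mdimUpper_ge_of_horseshoes (φ : unitInterval → unitInterval) (hφ : Continuous φ)
    (a b : ℕ → ℝ) (hab : ∀ k, a k < b k)
    (hsub : ∀ k, Set.Icc (a k) (b k) ⊆ Set.Icc (0 : ℝ) 1)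
    (s : ℕ → ℕ) (hs : ∀ k, 1 ≤ s k)
    (hhorse : ∀ k, ∀ i < s k, Set.Icc (a k) (b k) ⊆
      (fun x : unitInterval => (φ x : ℝ)) ''
        {x : unitInterval | (x : ℝ) ∈
          Set.Icc (a k + (i : ℝ) * ((b k - a k) / (s k : ℝ)))
            (a k + ((i : ℝ) + 1) * ((b k - a k) / (s k : ℝ)))})
    (hε : Filter.Tendsto (fun k : ℕ => (b k - a k) / (s k : ℝ)) Filter.atTop (nhds 0)) :
    Filter.limsup (fun k : ℕ =>
        Real.log (s k) / |Real.log ((b k - a k) / (s k : ℝ))|) Filter.atTop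
      ≤ mdimUpper dI φ := by
  classical
  set e : ℕ → ℝ := fun k => (b k - a k) / (s k : ℝ) with hedef
  have he : ∀ k, 0 < e k := fun k =>
    div_pos (sub_pos.2 (hab k)) (by exact_mod_cast hs k)
  set m : ℕ → ℕ := fun k => (s k + 1) / 2 with hmdef
  have hm1 : ∀ k, 1 ≤ m k := fun k => by have := hs k; simp only [hmdef]; omega
  have hs2m : ∀ k, s k ≤ 2 * m k := fun k => by simp only [hmdef]; omega
  have hsepExp : ∀ k, Real.log (m k) ≤ sepExp dI φ (e k / 2) := by
    intro k
    exact log_le_sepExp (half_pos (he k)) (hm1 k)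
      (fun n => horseshoe_sepNum (hab k) (hsub k) (hs k) (hhorse k) n)
  have hL0 : ∀ k, 0 ≤ Real.log (s k) / |Real.log (e k)| := fun k =>
    div_nonneg (Real.log_nonneg (by exact_mod_cast hs k)) (abs_nonneg _)
  -- the pointwise chain
  have hev_half : ∀ᶠ k in atTop, e k ≤ 1 / 2 :=
    hε.eventually (eventually_le_nhds (by norm_num))
  have hchain : ∀ᶠ k in atTop, Real.log (s k) / |Real.log (e k)| ≤
      sepExp dI φ (e k / 2) / |Real.log (e k / 2)| + 3 * Real.log 2 / |Real.log (e k)| := by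
    filter_upwards [hev_half] with k hk
    set D := sepExp dI φ (e k / 2) with hDdef
    have hlog2 : (0 : ℝ) < Real.log 2 := Real.log_pos (by norm_num)
    have hloge : Real.log (e k) < 0 := Real.log_neg (he k) (by linarith)
    have hloge2 : Real.log (e k) ≤ -Real.log 2 := by
      have : Real.log (e k) ≤ Real.log (1 / 2) := Real.log_le_log (he k) hk
      simpa [Real.log_div, Real.log_one] using this
    have habs : |Real.log (e k)| = -Real.log (e k) := abs_of_neg hloge
    have hlpos : 0 < |Real.log (e k)| := by rw [habs]; linarith
    have hloghalf : Real.log (e k / 2) = Real.log (e k) - Real.log 2 :=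
      Real.log_div (he k).ne' two_ne_zero
    have habs' : |Real.log (e k / 2)| = |Real.log (e k)| + Real.log 2 := by
      rw [abs_of_neg (by rw [hloghalf]; linarith), hloghalf, habs]; ring
    have hl'pos : 0 < |Real.log (e k / 2)| := by rw [habs']; linarith
    have hD0 : 0 ≤ D := sepExp_nonneg (half_pos (he k))
    have hD2 : D ≤ 2 * |Real.log (e k / 2)| :=
      sepExp_le_two_abs_log (half_pos (he k)) (by linarith)
    have hlogs : Real.log (s k) ≤ Real.log 2 + Real.log (m k) := by
      have hcast : (s k : ℝ) ≤ 2 * (m k : ℝ) := by exact_mod_cast hs2m k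
      calc Real.log (s k) ≤ Real.log (2 * (m k : ℝ)) :=
            Real.log_le_log (by exact_mod_cast hs k) hcast
        _ = Real.log 2 + Real.log (m k) := Real.log_mul two_ne_zero
            (Nat.cast_ne_zero.mpr (Nat.one_le_iff_ne_zero.mp (hm1 k)))
    have hlogsD : Real.log (s k) ≤ Real.log 2 + D := by linarith [hsepExp k]
    set t := D / |Real.log (e k / 2)| with htdef
    have ht2 : t ≤ 2 := by rw [htdef, div_le_iff₀ hl'pos]; linarith
    have ht0 : 0 ≤ t := div_nonneg hD0 hl'pos.le
    have htD : D = t * |Real.log (e k / 2)| := (div_mul_cancel₀ D hl'pos.ne').symm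
    rw [div_le_iff₀ hlpos]
    have hexpand : (t + 3 * Real.log 2 / |Real.log (e k)|) * |Real.log (e k)| =
        t * |Real.log (e k)| + 3 * Real.log 2 := by
      field_simp
    rw [hexpand]
    nlinarith [mul_le_mul_of_nonneg_right ht2 hlog2.le]
  -- filter arguments
  have htend0 : Tendsto e atTop (𝓝[>] (0 : ℝ)) :=
    tendsto_nhdsWithin_of_tendsto_nhds_of_eventually_within _ hε
      (Eventually.of_forall fun k => he k)
  have htend0' : Tendsto (fun k => e k / 2) atTop (𝓝[>] (0 : ℝ)) := by
    refine tendsto_nhdsWithin_of_tendsto_nhds_of_eventually_within _ ?_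
      (Eventually.of_forall fun k => half_pos (he k))
    simpa using hε.div_const 2
  have hlogtop : Tendsto (fun k => |Real.log (e k)|) atTop atTop :=
    tendsto_abs_atBot_atTop.comp (Real.tendsto_log_nhdsGT_zero.comp htend0)
  have htail : Tendsto (fun k => 3 * Real.log 2 / |Real.log (e k)|) atTop (𝓝 0) :=
    Tendsto.div_atTop tendsto_const_nhds hlogtop
  refine le_of_forall_pos_le_add fun δ hδ => ?_
  have hS2 : mdimUpper dI φ =
      sInf {x : ℝ | ∀ᶠ ε in 𝓝[>] (0 : ℝ), sepExp dI φ ε / |Real.log ε| ≤ x} := by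
    rw [mdimUpper, Filter.limsup_eq]
  have hS2ne : {x : ℝ | ∀ᶠ ε in 𝓝[>] (0 : ℝ),
      sepExp dI φ ε / |Real.log ε| ≤ x}.Nonempty := by
    refine ⟨2, ?_⟩
    have h1 : ∀ᶠ ε in 𝓝[>] (0 : ℝ), ε ≤ 1 / 2 :=
      eventually_nhdsWithin_of_eventually_nhds (eventually_le_nhds (by norm_num))
    filter_upwards [h1, eventually_mem_nhdsWithin] with ε h1 h2
    simp only [Set.mem_Ioi] at h2
    have hloge : Real.log ε < 0 := Real.log_neg h2 (by linarith)
    have hlpos : 0 < |Real.log ε| := abs_pos.2 hloge.ne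
    rw [div_le_iff₀ hlpos]
    have := sepExp_le_two_abs_log (φ := φ) h2 h1
    linarith
  obtain ⟨x0, hx0S, hx0lt⟩ := exists_lt_of_csInf_lt hS2ne
    (by rw [← hS2]; linarith : sInf _ < mdimUpper dI φ + δ / 2)
  have hevg : ∀ᶠ k in atTop,
      sepExp dI φ (e k / 2) / |Real.log (e k / 2)| ≤ x0 := htend0'.eventually hx0S
  have hevtail : ∀ᶠ k in atTop, 3 * Real.log 2 / |Real.log (e k)| ≤ δ / 2 :=
    htail.eventually (eventually_le_nhds (half_pos hδ))
  apply Filter.limsup_le_of_le (Filter.isCoboundedUnder_le_of_le _ hL0)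
  filter_upwards [hchain, hevg, hevtail] with k h1 h2 h3
  have : Real.log (s k) / |Real.log (e k)| ≤ x0 + δ / 2 := by linarith
  linarith
end
end
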